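/- arXiv:2409.07336 — 6 statements merged into one kernel-verified Lean document; each statement's English description precedes it below -/
import Mathlib

section
/- Let d ∈ ℕ and Φ = (φ₀,…,φ_d) ∈ ℝ^{d+1}, and let P(x) and Q(x) denote the (1,1) and (1,2) entries of the QSP unitary M_Φ(x). Then: (a) for every x ∈ ℝ, the (2,1) entry of M_Φ(x) equals −conj(Q(x)) and the (2,2) entry equals conj(P(x)); (b) there exist complex coefficients a₀,…,a_d with a_j = 0 whenever j ≢ d (mod 2) such that P(x) = Σ_{j=0}^{d} a_j cos(jx) for all x ∈ ℝ; (c) there exist complex coefficients b₁,…,b_d with b_j = 0 whenever j ≢ d (mod 2) such that Q(x) = Σ_{j=1}^{d} b_j sin(jx) for all x ∈ ℝ; (d) |P(x)|² + |Q(x)|² = 1 for all x ∈ ℝ. -/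
/-!
STATEMENT 0 (Necessary conditions for QSP).
For x, φ ∈ ℝ, W(x) is the 2×2 matrix with rows (cos x, i sin x), (i sin x, cos x),
Z(φ) = diag(e^{iφ}, e^{-iφ}).  For Φ = (φ₀,…,φ_d) the QSP unitary is
M_Φ(x) := Z(φ₀)·∏_{k=1}^d (W(x)·Z(φ_k)).
-/

open Complex Matrix
open scoped Matrix

noncomputable def Wgate (x : ℝ) : Matrix (Fin 2) (Fin 2) ℂ :=
  !![(Real.cos x : ℂ), (Real.sin x : ℂ) * Complex.I;
     (Real.sin x : ℂ) * Complex.I, (Real.cos x : ℂ)]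

noncomputable def Zgate (φ : ℝ) : Matrix (Fin 2) (Fin 2) ℂ :=
  !![Complex.exp ((φ : ℂ) * Complex.I), 0;
     0, Complex.exp (-(φ : ℂ) * Complex.I)]

/-- The QSP unitary `M_Φ(x) = Z(φ₀)·∏_{k=1}^d (W(x)·Z(φ_k))`. -/
noncomputable def Mqsp (d : ℕ) (Φ : Fin (d + 1) → ℝ) (x : ℝ) :
    Matrix (Fin 2) (Fin 2) ℂ :=
  Zgate (Φ 0) * (List.ofFn (fun k : Fin d => Wgate x * Zgate (Φ k.succ))).prod



/-- Coefficient shifting operation. -/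
noncomputable def shiftCoeff (δ ε τ : ℂ) (a : ℕ → ℂ) : ℕ → ℂ :=
  fun k => (δ * (if k = 0 then 0 else a (k - 1)) + ε * a (k + 1) +
      (if k = 1 then ε * τ * a 0 else 0)) / 2

lemma shiftCoeff_parity {d : ℕ} {a : ℕ → ℂ} (δ ε τ : ℂ)
    (h : ∀ j, j % 2 ≠ d % 2 → a j = 0) :
    ∀ k, k % 2 ≠ (d + 1) % 2 → shiftCoeff δ ε τ a k = 0 := by
  intro k hk
  have h1 : a (k + 1) = 0 := h _ (by omega)
  by_cases h0 : k = 0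
  · subst h0
    simp [shiftCoeff, h 1 (by omega)]
  · by_cases hk1 : k = 1
    · subst hk1
      simp [shiftCoeff, h 0 (by omega), h 2 (by omega)]
    · simp [shiftCoeff, h0, hk1, h (k - 1) (by omega), h1]

lemma shiftCoeff_support {d : ℕ} {a : ℕ → ℂ} (δ ε τ : ℂ)
    (h : ∀ j, d < j → a j = 0) :
    ∀ k, d + 1 < k → shiftCoeff δ ε τ a k = 0 := by
  intro k hk
  have h1 : a (k + 1) = 0 := h _ (by omega)
  have h2 : a (k - 1) = 0 := h _ (by omega)
  have h0 : k ≠ 0 := by omega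
  have hk1 : k ≠ 1 := by omega
  simp [shiftCoeff, h0, hk1, h1, h2]

/-- Master sum-shifting lemma. -/
lemma master_sum (d : ℕ) (a : ℕ → ℂ) (ha : ∀ j, d < j → a j = 0)
    (G T : ℕ → ℂ) (δ ε τ : ℂ)
    (hT : ∀ j, T j = (δ * G (j + 1) + ε * (if j = 0 then τ * G 1 else G (j - 1))) / 2) :
    ∑ j ∈ Finset.range (d + 1), a j * T j
      = ∑ k ∈ Finset.range (d + 2), shiftCoeff δ ε τ a k * G k := by
  have hsplit : ∀ k ∈ Finset.range (d + 2), shiftCoeff δ ε τ a k * G k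
      = δ * (if k = 0 then 0 else a (k - 1)) * G k / 2 + ε * a (k + 1) * G k / 2
        + (if k = 1 then ε * τ * a 0 else 0) * G k / 2 := by
    intro k _; unfold shiftCoeff; ring
  rw [Finset.sum_congr rfl hsplit]
  rw [Finset.sum_add_distrib, Finset.sum_add_distrib]
  -- first sum
  have e1 : ∑ k ∈ Finset.range (d + 2), δ * (if k = 0 then 0 else a (k - 1)) * G k / 2
      = ∑ j ∈ Finset.range (d + 1), δ * a j * G (j + 1) / 2 := by
    rw [Finset.sum_range_succ']
    simp
  -- second sum
  have e2 : ∑ k ∈ Finset.range (d + 2), ε * a (k + 1) * G k / 2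
      = ∑ k ∈ Finset.range d, ε * a (k + 1) * G k / 2 := by
    rw [Finset.sum_range_succ, Finset.sum_range_succ, ha (d + 1) (by omega),
      ha (d + 2) (by omega)]
    ring
  -- third sum
  have e3 : ∑ k ∈ Finset.range (d + 2), (if k = 1 then ε * τ * a 0 else 0) * G k / 2
      = ε * τ * a 0 * G 1 / 2 := by
    rw [Finset.sum_eq_single 1]
    · simp
    · intro b _ hb; simp [hb]
    · intro h; exact absurd (Finset.mem_range.2 (by omega)) h
  rw [e1, e2, e3]
  have hL : ∀ j ∈ Finset.range (d + 1), a j * T j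
      = δ * a j * G (j + 1) / 2 + a j * (ε * (if j = 0 then τ * G 1 else G (j - 1))) / 2 := by
    intro j _; rw [hT j]; ring
  rw [Finset.sum_congr rfl hL, Finset.sum_add_distrib]
  have this1 : ∀ i ∈ Finset.range d,
      a (i + 1) * (ε * (if i + 1 = 0 then τ * G 1 else G (i + 1 - 1))) / 2
      = ε * a (i + 1) * G i / 2 := by
    intro i _
    have : i + 1 ≠ 0 := Nat.succ_ne_zero i
    simp only [this, if_false, Nat.add_sub_cancel]
    ring
  have e4 : ∑ j ∈ Finset.range (d + 1), a j * (ε * (if j = 0 then τ * G 1 else G (j - 1))) / 2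
      = ∑ k ∈ Finset.range d, ε * a (k + 1) * G k / 2 + ε * τ * a 0 * G 1 / 2 := by
    rw [Finset.sum_range_succ'
      (fun j => a j * (ε * (if j = 0 then τ * G 1 else G (j - 1))) / 2) d]
    rw [Finset.sum_congr rfl this1]
    norm_num
    ring
  rw [e4]
  ring

def IsCos (d : ℕ) (P : ℝ → ℂ) : Prop :=
  ∃ a : ℕ → ℂ, (∀ j, j % 2 ≠ d % 2 → a j = 0) ∧ (∀ j, d < j → a j = 0) ∧
    ∀ x : ℝ, P x = ∑ j ∈ Finset.range (d + 1), a j * (Real.cos (j * x) : ℂ)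

def IsSin (d : ℕ) (Q : ℝ → ℂ) : Prop :=
  ∃ b : ℕ → ℂ, (∀ j, j % 2 ≠ d % 2 → b j = 0) ∧ (∀ j, d < j → b j = 0) ∧
    ∀ x : ℝ, Q x = ∑ j ∈ Finset.range (d + 1), b j * (Real.sin (j * x) : ℂ)

lemma isCos_smul {d : ℕ} {P : ℝ → ℂ} (c : ℂ) (h : IsCos d P) :
    IsCos d (fun x => c * P x) := by
  obtain ⟨a, h1, h2, h3⟩ := h
  refine ⟨fun j => c * a j, fun j hj => by dsimp only; rw [h1 j hj, mul_zero],
    fun j hj => by dsimp only; rw [h2 j hj, mul_zero], fun x => ?_⟩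
  dsimp only
  rw [h3 x, Finset.mul_sum]
  exact Finset.sum_congr rfl fun j _ => by ring

lemma isSin_smul {d : ℕ} {Q : ℝ → ℂ} (c : ℂ) (h : IsSin d Q) :
    IsSin d (fun x => c * Q x) := by
  obtain ⟨b, h1, h2, h3⟩ := h
  refine ⟨fun j => c * b j, fun j hj => by dsimp only; rw [h1 j hj, mul_zero],
    fun j hj => by dsimp only; rw [h2 j hj, mul_zero], fun x => ?_⟩
  dsimp only
  rw [h3 x, Finset.mul_sum]
  exact Finset.sum_congr rfl fun j _ => by ring

lemma isCos_add {d : ℕ} {P P' : ℝ → ℂ} (h : IsCos d P) (h' : IsCos d P') :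
    IsCos d (fun x => P x + P' x) := by
  obtain ⟨a, h1, h2, h3⟩ := h
  obtain ⟨a', h1', h2', h3'⟩ := h'
  refine ⟨fun j => a j + a' j, fun j hj => by dsimp only; rw [h1 j hj, h1' j hj, add_zero],
    fun j hj => by dsimp only; rw [h2 j hj, h2' j hj, add_zero], fun x => ?_⟩
  dsimp only
  rw [h3 x, h3' x, ← Finset.sum_add_distrib]
  exact Finset.sum_congr rfl fun j _ => by ring

lemma isSin_add {d : ℕ} {Q Q' : ℝ → ℂ} (h : IsSin d Q) (h' : IsSin d Q') :
    IsSin d (fun x => Q x + Q' x) := by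
  obtain ⟨b, h1, h2, h3⟩ := h
  obtain ⟨b', h1', h2', h3'⟩ := h'
  refine ⟨fun j => b j + b' j,
    fun j hj => by dsimp only; rw [h1 j hj, h1' j hj, add_zero],
    fun j hj => by dsimp only; rw [h2 j hj, h2' j hj, add_zero], fun x => ?_⟩
  dsimp only
  rw [h3 x, h3' x, ← Finset.sum_add_distrib]
  exact Finset.sum_congr rfl fun j _ => by ring

-- real trig product identities in the shape needed
lemma cos_mul_cos_id (x : ℝ) (j : ℕ) :
    ((Real.cos (j * x) : ℂ)) * (Real.cos x : ℂ)
      = (1 * (Real.cos ((j + 1 : ℕ) * x) : ℂ)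
        + 1 * (if j = 0 then 1 * (Real.cos ((1 : ℕ) * x) : ℂ)
            else (Real.cos ((j - 1 : ℕ) * x) : ℂ))) / 2 := by
  rcases j with _ | i
  · norm_num
  · have hi : (i + 1 : ℕ) ≠ 0 := Nat.succ_ne_zero i
    simp only [hi, if_false]
    have hr : Real.cos ((i + 1 : ℕ) * x) * Real.cos x
        = (Real.cos ((i + 2 : ℕ) * x) + Real.cos ((i : ℕ) * x)) / 2 := by
      have h1 := Real.cos_add ((i + 1 : ℕ) * x) x
      have h2 := Real.cos_sub ((i + 1 : ℕ) * x) x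
      have e1 : ((i + 1 : ℕ) : ℝ) * x + x = ((i + 2 : ℕ) : ℝ) * x := by push_cast; ring
      have e2 : ((i + 1 : ℕ) : ℝ) * x - x = ((i : ℕ) : ℝ) * x := by push_cast; ring
      rw [e1] at h1; rw [e2] at h2
      linarith
    have : ((i + 1 : ℕ) + 1) = (i + 2 : ℕ) := rfl
    rw [this, Nat.add_sub_cancel, one_mul, one_mul]
    exact_mod_cast hr

lemma sin_mul_sin_id (x : ℝ) (j : ℕ) :
    ((Real.sin (j * x) : ℂ)) * (Real.sin x : ℂ)
      = ((-1) * (Real.cos ((j + 1 : ℕ) * x) : ℂ)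
        + 1 * (if j = 0 then 1 * (Real.cos ((1 : ℕ) * x) : ℂ)
            else (Real.cos ((j - 1 : ℕ) * x) : ℂ))) / 2 := by
  rcases j with _ | i
  · norm_num
  · have hi : (i + 1 : ℕ) ≠ 0 := Nat.succ_ne_zero i
    simp only [hi, if_false]
    have hr : Real.sin ((i + 1 : ℕ) * x) * Real.sin x
        = (-Real.cos ((i + 2 : ℕ) * x) + Real.cos ((i : ℕ) * x)) / 2 := by
      have h1 := Real.cos_add ((i + 1 : ℕ) * x) x
      have h2 := Real.cos_sub ((i + 1 : ℕ) * x) x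
      have e1 : ((i + 1 : ℕ) : ℝ) * x + x = ((i + 2 : ℕ) : ℝ) * x := by push_cast; ring
      have e2 : ((i + 1 : ℕ) : ℝ) * x - x = ((i : ℕ) : ℝ) * x := by push_cast; ring
      rw [e1] at h1; rw [e2] at h2
      linarith
    have h3 : ((i + 1 : ℕ) + 1) = (i + 2 : ℕ) := rfl
    rw [h3, Nat.add_sub_cancel, one_mul, neg_one_mul, ← sub_eq_neg_add,
      show ∀ u v : ℂ, v - u = -u + v from fun u v => by ring]
    exact_mod_cast hr

lemma cos_mul_sin_id (x : ℝ) (j : ℕ) :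
    ((Real.cos (j * x) : ℂ)) * (Real.sin x : ℂ)
      = (1 * (Real.sin ((j + 1 : ℕ) * x) : ℂ)
        + (-1) * (if j = 0 then (-1) * (Real.sin ((1 : ℕ) * x) : ℂ)
            else (Real.sin ((j - 1 : ℕ) * x) : ℂ))) / 2 := by
  rcases j with _ | i
  · norm_num
  · have hi : (i + 1 : ℕ) ≠ 0 := Nat.succ_ne_zero i
    simp only [hi, if_false]
    have hr : Real.cos ((i + 1 : ℕ) * x) * Real.sin x
        = (Real.sin ((i + 2 : ℕ) * x) - Real.sin ((i : ℕ) * x)) / 2 := by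
      have h1 := Real.sin_add ((i + 1 : ℕ) * x) x
      have h2 := Real.sin_sub ((i + 1 : ℕ) * x) x
      have e1 : ((i + 1 : ℕ) : ℝ) * x + x = ((i + 2 : ℕ) : ℝ) * x := by push_cast; ring
      have e2 : ((i + 1 : ℕ) : ℝ) * x - x = ((i : ℕ) : ℝ) * x := by push_cast; ring
      rw [e1] at h1; rw [e2] at h2
      linarith
    have h3 : ((i + 1 : ℕ) + 1) = (i + 2 : ℕ) := rfl
    rw [h3, Nat.add_sub_cancel, one_mul, neg_one_mul, ← sub_eq_add_neg]
    exact_mod_cast hr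

lemma sin_mul_cos_id (x : ℝ) (j : ℕ) :
    ((Real.sin (j * x) : ℂ)) * (Real.cos x : ℂ)
      = (1 * (Real.sin ((j + 1 : ℕ) * x) : ℂ)
        + 1 * (if j = 0 then (-1) * (Real.sin ((1 : ℕ) * x) : ℂ)
            else (Real.sin ((j - 1 : ℕ) * x) : ℂ))) / 2 := by
  rcases j with _ | i
  · norm_num
  · have hi : (i + 1 : ℕ) ≠ 0 := Nat.succ_ne_zero i
    simp only [hi, if_false]
    have hr : Real.sin ((i + 1 : ℕ) * x) * Real.cos x
        = (Real.sin ((i + 2 : ℕ) * x) + Real.sin ((i : ℕ) * x)) / 2 := by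
      have h1 := Real.sin_add ((i + 1 : ℕ) * x) x
      have h2 := Real.sin_sub ((i + 1 : ℕ) * x) x
      have e1 : ((i + 1 : ℕ) : ℝ) * x + x = ((i + 2 : ℕ) : ℝ) * x := by push_cast; ring
      have e2 : ((i + 1 : ℕ) : ℝ) * x - x = ((i : ℕ) : ℝ) * x := by push_cast; ring
      rw [e1] at h1; rw [e2] at h2
      linarith
    have h3 : ((i + 1 : ℕ) + 1) = (i + 2 : ℕ) := rfl
    rw [h3, Nat.add_sub_cancel, one_mul, one_mul]
    exact_mod_cast hr

lemma isCos_mul_cos {d : ℕ} {P : ℝ → ℂ} (h : IsCos d P) :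
    IsCos (d + 1) (fun x => P x * (Real.cos x : ℂ)) := by
  obtain ⟨a, h1, h2, h3⟩ := h
  refine ⟨shiftCoeff 1 1 1 a, shiftCoeff_parity 1 1 1 h1, shiftCoeff_support 1 1 1 h2,
    fun x => ?_⟩
  dsimp only
  rw [h3 x, Finset.sum_mul]
  have e : ∀ j ∈ Finset.range (d + 1),
      a j * (Real.cos (j * x) : ℂ) * (Real.cos x : ℂ)
        = a j * ((Real.cos (j * x) : ℂ) * (Real.cos x : ℂ)) := fun j _ => mul_assoc _ _ _
  rw [Finset.sum_congr rfl e]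
  exact master_sum d a h2 _ _ 1 1 1 (fun j => cos_mul_cos_id x j)

lemma isSin_mul_sin {d : ℕ} {Q : ℝ → ℂ} (h : IsSin d Q) :
    IsCos (d + 1) (fun x => Q x * (Real.sin x : ℂ)) := by
  obtain ⟨b, h1, h2, h3⟩ := h
  refine ⟨shiftCoeff (-1) 1 1 b, shiftCoeff_parity (-1) 1 1 h1,
    shiftCoeff_support (-1) 1 1 h2, fun x => ?_⟩
  dsimp only
  rw [h3 x, Finset.sum_mul]
  have e : ∀ j ∈ Finset.range (d + 1),
      b j * (Real.sin (j * x) : ℂ) * (Real.sin x : ℂ)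
        = b j * ((Real.sin (j * x) : ℂ) * (Real.sin x : ℂ)) := fun j _ => mul_assoc _ _ _
  rw [Finset.sum_congr rfl e]
  exact master_sum d b h2 _ _ (-1) 1 1 (fun j => sin_mul_sin_id x j)

lemma isCos_mul_sin {d : ℕ} {P : ℝ → ℂ} (h : IsCos d P) :
    IsSin (d + 1) (fun x => P x * (Real.sin x : ℂ)) := by
  obtain ⟨a, h1, h2, h3⟩ := h
  refine ⟨shiftCoeff 1 (-1) (-1) a, shiftCoeff_parity 1 (-1) (-1) h1,
    shiftCoeff_support 1 (-1) (-1) h2, fun x => ?_⟩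
  dsimp only
  rw [h3 x, Finset.sum_mul]
  have e : ∀ j ∈ Finset.range (d + 1),
      a j * (Real.cos (j * x) : ℂ) * (Real.sin x : ℂ)
        = a j * ((Real.cos (j * x) : ℂ) * (Real.sin x : ℂ)) := fun j _ => mul_assoc _ _ _
  rw [Finset.sum_congr rfl e]
  exact master_sum d a h2 _ _ 1 (-1) (-1) (fun j => cos_mul_sin_id x j)

lemma isSin_mul_cos {d : ℕ} {Q : ℝ → ℂ} (h : IsSin d Q) :
    IsSin (d + 1) (fun x => Q x * (Real.cos x : ℂ)) := by
  obtain ⟨b, h1, h2, h3⟩ := h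
  refine ⟨shiftCoeff 1 1 (-1) b, shiftCoeff_parity 1 1 (-1) h1,
    shiftCoeff_support 1 1 (-1) h2, fun x => ?_⟩
  dsimp only
  rw [h3 x, Finset.sum_mul]
  have e : ∀ j ∈ Finset.range (d + 1),
      b j * (Real.sin (j * x) : ℂ) * (Real.cos x : ℂ)
        = b j * ((Real.sin (j * x) : ℂ) * (Real.cos x : ℂ)) := fun j _ => mul_assoc _ _ _
  rw [Finset.sum_congr rfl e]
  exact master_sum d b h2 _ _ 1 1 (-1) (fun j => sin_mul_cos_id x j)

lemma mqsp_succ (d : ℕ) (Φ : Fin (d + 2) → ℝ) (x : ℝ) :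
    Mqsp (d + 1) Φ x
      = Mqsp d (fun i => Φ i.castSucc) x * (Wgate x * Zgate (Φ (Fin.last (d + 1)))) := by
  unfold Mqsp
  rw [List.ofFn_succ']
  rw [List.concat_eq_append, List.prod_append, List.prod_cons, List.prod_nil, mul_one,
    ← mul_assoc]
  rw [Fin.succ_last]
  simp only [Fin.succ_castSucc, Fin.castSucc_zero]

lemma WZ_eval (x ψ : ℝ) : Wgate x * Zgate ψ =
    !![(Real.cos x : ℂ) * Complex.exp ((ψ : ℂ) * Complex.I),
       (Real.sin x : ℂ) * Complex.I * Complex.exp (-(ψ : ℂ) * Complex.I);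
       (Real.sin x : ℂ) * Complex.I * Complex.exp ((ψ : ℂ) * Complex.I),
       (Real.cos x : ℂ) * Complex.exp (-(ψ : ℂ) * Complex.I)] := by
  ext i j
  fin_cases i <;> fin_cases j <;>
    simp [Wgate, Zgate, Matrix.mul_apply, Fin.sum_univ_two] <;> ring

lemma conj_exp_I (ψ : ℝ) :
    (starRingEnd ℂ) (Complex.exp ((ψ : ℂ) * Complex.I))
      = Complex.exp (-(ψ : ℂ) * Complex.I) := by
  rw [← Complex.exp_conj, _root_.map_mul, Complex.conj_I, Complex.conj_ofReal]
  ring_nf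

lemma conj_exp_negI (ψ : ℝ) :
    (starRingEnd ℂ) (Complex.exp (-(ψ : ℂ) * Complex.I))
      = Complex.exp ((ψ : ℂ) * Complex.I) := by
  rw [← Complex.exp_conj, _root_.map_mul, map_neg, Complex.conj_I, Complex.conj_ofReal]
  ring_nf

lemma conj_exp_negI' (ψ : ℝ) :
    (starRingEnd ℂ) (Complex.exp (-((ψ : ℂ) * Complex.I)))
      = Complex.exp ((ψ : ℂ) * Complex.I) := by
  rw [← Complex.exp_conj, map_neg, _root_.map_mul, Complex.conj_I, Complex.conj_ofReal]
  ring_nf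

lemma conj_ccos (x : ℝ) : (starRingEnd ℂ) (Complex.cos (x : ℂ)) = Complex.cos (x : ℂ) := by
  rw [← Complex.ofReal_cos, Complex.conj_ofReal]

lemma conj_csin (x : ℝ) : (starRingEnd ℂ) (Complex.sin (x : ℂ)) = Complex.sin (x : ℂ) := by
  rw [← Complex.ofReal_sin, Complex.conj_ofReal]

lemma qsp_structure (d : ℕ) (Φ : Fin (d + 1) → ℝ) :
    ∃ P Q : ℝ → ℂ, IsCos d P ∧ IsSin d Q ∧
      ∀ x : ℝ, Mqsp d Φ x
        = !![P x, Q x; -(starRingEnd ℂ) (Q x), (starRingEnd ℂ) (P x)] := by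
  induction d with
  | zero =>
    refine ⟨fun _ => Complex.exp ((Φ 0 : ℂ) * Complex.I), fun _ => 0, ?_, ?_, ?_⟩
    · refine ⟨fun j => if j = 0 then Complex.exp ((Φ 0 : ℂ) * Complex.I) else 0,
        fun j hj => by simp only [Nat.zero_mod] at hj; simp [show j ≠ 0 by omega],
        fun j hj => by simp [show j ≠ 0 by omega], fun x => ?_⟩
      simp
    · exact ⟨fun _ => 0, fun _ _ => rfl, fun _ _ => rfl, fun x => by simp⟩
    · intro x
      unfold Mqsp
      have : (List.ofFn fun k : Fin 0 => Wgate x * Zgate (Φ k.succ)) = [] := rfl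
      rw [this, List.prod_nil, mul_one, Zgate]
      ext i j
      fin_cases i <;> fin_cases j <;> simp [conj_exp_I]
  | succ d IH =>
    obtain ⟨P, Q, hP, hQ, hM⟩ := IH (fun i => Φ i.castSucc)
    set ψ := Φ (Fin.last (d + 1)) with hψ
    refine ⟨fun x => Complex.exp ((ψ : ℂ) * Complex.I) * (P x * (Real.cos x : ℂ))
        + Complex.exp ((ψ : ℂ) * Complex.I) * Complex.I * (Q x * (Real.sin x : ℂ)),
      fun x => Complex.exp (-(ψ : ℂ) * Complex.I) * Complex.I * (P x * (Real.sin x : ℂ))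
        + Complex.exp (-(ψ : ℂ) * Complex.I) * (Q x * (Real.cos x : ℂ)), ?_, ?_, ?_⟩
    · exact isCos_add (isCos_smul _ (isCos_mul_cos hP)) (isCos_smul _ (isSin_mul_sin hQ))
    · exact isSin_add (isSin_smul _ (isCos_mul_sin hP)) (isSin_smul _ (isSin_mul_cos hQ))
    · intro x
      rw [mqsp_succ d Φ x, hM x, WZ_eval, ← hψ]
      ext i j
      fin_cases i <;> fin_cases j <;>
        simp [Matrix.mul_apply, Fin.sum_univ_two, _root_.map_mul, map_add, map_neg,
          Complex.conj_I, Complex.conj_ofReal, conj_exp_I, conj_exp_negI, conj_exp_negI',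
          conj_ccos, conj_csin] <;> ring

lemma det_Zgate (φ : ℝ) : (Zgate φ).det = 1 := by
  rw [Zgate, Matrix.det_fin_two_of]
  rw [mul_zero, sub_zero, ← Complex.exp_add]
  ring_nf
  exact Complex.exp_zero

lemma det_Wgate (x : ℝ) : (Wgate x).det = 1 := by
  rw [Wgate, Matrix.det_fin_two_of]
  have h : ((Real.cos x : ℂ)) * (Real.cos x : ℂ)
      - (Real.sin x : ℂ) * Complex.I * ((Real.sin x : ℂ) * Complex.I)
      = ((Real.sin x ^ 2 + Real.cos x ^ 2 : ℝ) : ℂ) := by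
    have : Complex.I * Complex.I = -1 := Complex.I_mul_I
    push_cast
    ring_nf
    rw [Complex.I_sq]
    ring
  rw [h, Real.sin_sq_add_cos_sq, Complex.ofReal_one]

lemma det_Mqsp (d : ℕ) (Φ : Fin (d + 1) → ℝ) (x : ℝ) : (Mqsp d Φ x).det = 1 := by
  unfold Mqsp
  rw [Matrix.det_mul, det_Zgate, one_mul]
  have h := map_list_prod (Matrix.detMonoidHom : Matrix (Fin 2) (Fin 2) ℂ →* ℂ)
    (List.ofFn (fun k : Fin d => Wgate x * Zgate (Φ k.succ)))
  simp only [Matrix.coe_detMonoidHom] at h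
  rw [h]
  apply List.prod_eq_one
  intro y hy
  rw [List.map_ofFn] at hy
  obtain ⟨i, hi⟩ := List.mem_ofFn.1 hy
  rw [← hi]
  show ((Wgate x * Zgate (Φ i.succ)).det) = 1
  rw [Matrix.det_mul, det_Wgate, det_Zgate, one_mul]

theorem qsp_necessary_conditions (d : ℕ) (Φ : Fin (d + 1) → ℝ) :
    -- (a) the second row is determined by the first
    (∀ x : ℝ,
      Mqsp d Φ x 1 0 = -(starRingEnd ℂ) (Mqsp d Φ x 0 1) ∧
      Mqsp d Φ x 1 1 = (starRingEnd ℂ) (Mqsp d Φ x 0 0)) ∧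
    -- (b) P(x) = Σ_{j=0}^{d} a_j cos(jx) with a_j = 0 unless j ≡ d (mod 2)
    (∃ a : ℕ → ℂ, (∀ j : ℕ, j % 2 ≠ d % 2 → a j = 0) ∧
      ∀ x : ℝ, Mqsp d Φ x 0 0 =
        ∑ j ∈ Finset.range (d + 1), a j * (Real.cos (j * x) : ℂ)) ∧
    -- (c) Q(x) = Σ_{j=1}^{d} b_j sin(jx) with b_j = 0 unless j ≡ d (mod 2)
    (∃ b : ℕ → ℂ, (∀ j : ℕ, j % 2 ≠ d % 2 → b j = 0) ∧
      ∀ x : ℝ, Mqsp d Φ x 0 1 =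
        ∑ j ∈ Finset.Icc 1 d, b j * (Real.sin (j * x) : ℂ)) ∧
    -- (d) |P(x)|² + |Q(x)|² = 1 for all x
    (∀ x : ℝ,
      ‖Mqsp d Φ x 0 0‖ ^ 2 + ‖Mqsp d Φ x 0 1‖ ^ 2 = 1) := by
  obtain ⟨P, Q, hP, hQ, hM⟩ := qsp_structure d Φ
  have hP00 : ∀ x : ℝ, Mqsp d Φ x 0 0 = P x := fun x => by rw [hM x]; simp
  have hQ01 : ∀ x : ℝ, Mqsp d Φ x 0 1 = Q x := fun x => by rw [hM x]; simp
  refine ⟨fun x => ?_, ?_, ?_, fun x => ?_⟩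
  · rw [hM x]
    constructor <;> simp
  · obtain ⟨a, h1, h2, h3⟩ := hP
    exact ⟨a, h1, fun x => by rw [hP00 x, h3 x]⟩
  · obtain ⟨b, h1, h2, h3⟩ := hQ
    refine ⟨b, h1, fun x => ?_⟩
    rw [hQ01 x, h3 x]
    have hins : Finset.range (d + 1) = insert 0 (Finset.Icc 1 d) := by
      ext k
      simp only [Finset.mem_range, Finset.mem_insert, Finset.mem_Icc]
      omega
    rw [hins, Finset.sum_insert (by simp)]
    simp
  · have hdet := det_Mqsp d Φ x
    rw [hM x, Matrix.det_fin_two_of] at hdet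
    have key : P x * (starRingEnd ℂ) (P x) + Q x * (starRingEnd ℂ) (Q x) = 1 := by
      rw [← hdet]; ring
    rw [Complex.mul_conj, Complex.mul_conj] at key
    have hr : Complex.normSq (P x) + Complex.normSq (Q x) = 1 := by exact_mod_cast key
    rw [hP00 x, hQ01 x, Complex.sq_norm, Complex.sq_norm]
    exact hr
end

section
/- Let d ∈ ℕ and let P, Q : ℝ → ℂ be functions such that: (i) there exist complex coefficients a₀,…,a_d and b₁,…,b_d with P(x) = Σ_{j=0}^{d} a_j cos(jx) and Q(x) = Σ_{j=1}^{d} b_j sin(jx) for all x; (ii) a_j = 0 whenever j ≢ d (mod 2) and b_j = 0 whenever j ≢ d (mod 2); (iii) |P(x)|² + |Q(x)|² = 1 for all x ∈ [−π, π]. Then there exists Φ = (φ₀,…,φ_d) ∈ ℝ^{d+1} such that for all x ∈ [−π, π], the QSP unitary M_Φ(x) equals the 2×2 matrix with rows (P(x), Q(x)) and (−conj(Q(x)), conj(P(x))). -/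
/-!
STATEMENT 1 (Sufficient conditions for QSP).
For x, φ ∈ ℝ, W(x) is the 2×2 matrix with rows (cos x, i sin x), (i sin x, cos x),
Z(φ) = diag(e^{iφ}, e^{-iφ}).  For Φ = (φ₀,…,φ_d) the QSP unitary is
M_Φ(x) := Z(φ₀)·∏_{k=1}^d (W(x)·Z(φ_k)).
-/

open Complex Matrix
open scoped Matrix

namespace QSPproof

open Complex

/-! ### Exponential basics -/

noncomputable def Ef (j : ℤ) (x : ℝ) : ℂ := Complex.exp ((j : ℂ) * (x : ℂ) * Complex.I)

lemma Ef_add (j k : ℤ) (x : ℝ) : Ef (j + k) x = Ef j x * Ef k x := by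
  unfold Ef; rw [← Complex.exp_add]; push_cast; ring_nf

lemma Ef_zero (x : ℝ) : Ef 0 x = 1 := by simp [Ef]

lemma conj_Ef (j : ℤ) (x : ℝ) : (starRingEnd ℂ) (Ef j x) = Ef (-j) x := by
  unfold Ef
  rw [← Complex.exp_conj]
  congr 1
  simp

lemma Ef_mul_inv (j : ℤ) (x : ℝ) : Ef j x * Ef (-j) x = 1 := by
  rw [← Ef_add]; simp [Ef_zero]

lemma Ef_int_pow (j : ℤ) (x : ℝ) : Ef j x = Complex.exp ((x:ℂ) * Complex.I) ^ j := by
  unfold Ef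
  rw [← Complex.exp_int_mul]
  ring_nf

lemma Ef_periodic (j : ℤ) (x : ℝ) (k : ℤ) : Ef j (x + 2 * Real.pi * k) = Ef j x := by
  unfold Ef
  have : (j : ℂ) * ((x : ℝ) + 2 * Real.pi * k : ℝ) * Complex.I
      = (j : ℂ) * (x : ℂ) * Complex.I + ((j * k : ℤ) : ℂ) * (2 * (Real.pi : ℂ) * Complex.I) := by
    push_cast; ring
  rw [this, Complex.exp_add, Complex.exp_int_mul_two_pi_mul_I, mul_one]

/-! ### Finite trigonometric sums -/

noncomputable def S (N : ℕ) (c : ℤ → ℂ) (x : ℝ) : ℂ :=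
  ∑ j ∈ Finset.Icc (-(N : ℤ)) N, c j * Ef j x

lemma S_extend (N M : ℕ) (c : ℤ → ℂ) (hNM : N ≤ M)
    (hc : ∀ j : ℤ, (N : ℤ) < |j| → c j = 0) (x : ℝ) :
    S N c x = S M c x := by
  unfold S
  apply Finset.sum_subset
  · intro j hj
    simp only [Finset.mem_Icc] at hj ⊢
    omega
  · intro j hj hj'
    simp only [Finset.mem_Icc] at hj hj'
    rw [hc j (by rcases abs_cases j with ⟨h1,h2⟩|⟨h1,h2⟩ <;> omega), zero_mul]

lemma S_periodic (N : ℕ) (c : ℤ → ℂ) (x : ℝ) (k : ℤ) :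
    S N c (x + 2 * Real.pi * k) = S N c x := by
  unfold S
  exact Finset.sum_congr rfl fun j _ => by rw [Ef_periodic]

lemma sum_Icc_shift (a b t : ℤ) (g : ℤ → ℂ) :
    ∑ m ∈ Finset.Icc (a + t) (b + t), g m = ∑ j ∈ Finset.Icc a b, g (j + t) := by
  rw [← Finset.map_add_right_Icc, Finset.sum_map]
  rfl

lemma sum_Icc_neg_reindex (N : ℤ) (f : ℤ → ℂ) :
    ∑ j ∈ Finset.Icc (-N) N, f j = ∑ j ∈ Finset.Icc (-N) N, f (-j) := by
  apply Finset.sum_nbij' (fun i => -i) (fun i => -i) <;>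
    simp +contextual [Finset.mem_Icc] <;> omega

lemma conj_S (N : ℕ) (c : ℤ → ℂ) (x : ℝ) :
    (starRingEnd ℂ) (S N c x) = S N (fun k => (starRingEnd ℂ) (c (-k))) x := by
  unfold S
  rw [map_sum, sum_Icc_neg_reindex (N:ℤ) (fun j => (starRingEnd ℂ) (c (-j)) * Ef j x)]
  refine Finset.sum_congr rfl fun j _ => ?_
  rw [_root_.map_mul, conj_Ef]
  simp

lemma sum_Icc_symm_split (N : ℕ) (f : ℤ → ℂ) :
    ∑ j ∈ Finset.Icc (-(N : ℤ)) N, f j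
      = f 0 + ∑ j ∈ Finset.Icc 1 N, (f (j : ℤ) + f (-(j : ℤ))) := by
  induction N with
  | zero => simp
  | succ N ih =>
    have hset : Finset.Icc (-(N + 1 : ℕ) : ℤ) ((N + 1 : ℕ) : ℤ)
        = insert (-(N + 1 : ℕ) : ℤ) (insert ((N + 1 : ℕ) : ℤ) (Finset.Icc (-(N : ℤ)) N)) := by
      ext j
      simp only [Finset.mem_Icc, Finset.mem_insert]
      push_cast
      omega
    rw [hset, Finset.sum_insert, Finset.sum_insert]
    · rw [ih, Finset.sum_Icc_succ_top (by omega : 1 ≤ N + 1)]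
      push_cast
      ring
    · simp only [Finset.mem_Icc]; push_cast; omega
    · simp only [Finset.mem_insert, Finset.mem_Icc]; push_cast; omega

/-! ### Linear independence of integer-frequency exponentials -/

lemma coeff_zero (N : ℕ) (t : ℤ → ℂ)
    (h : ∀ x : ℝ, ∑ m ∈ Finset.Icc (-(N : ℤ)) N, t m * Ef m x = 0) :
    ∀ m ∈ Finset.Icc (-(N : ℤ)) N, t m = 0 := by
  classical
  set p : Polynomial ℂ :=
    ∑ m ∈ Finset.Icc (-(N : ℤ)) N, Polynomial.C (t m) * Polynomial.X ^ (m + N).toNat with hp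
  have hroot : ∀ x : ℝ, p.IsRoot (Complex.exp ((x:ℂ) * Complex.I)) := by
    intro x
    have hz : Complex.exp ((x:ℂ) * Complex.I) ≠ 0 := Complex.exp_ne_zero _
    have : p.eval (Complex.exp ((x:ℂ) * Complex.I))
        = Complex.exp ((x:ℂ) * Complex.I) ^ (N : ℤ)
          * ∑ m ∈ Finset.Icc (-(N : ℤ)) N, t m * Ef m x := by
      rw [hp, Polynomial.eval_finset_sum, Finset.mul_sum]
      refine Finset.sum_congr rfl fun m hm => ?_
      simp only [Finset.mem_Icc] at hm
      rw [Polynomial.eval_mul, Polynomial.eval_C, Polynomial.eval_pow, Polynomial.eval_X]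
      rw [Ef_int_pow]
      rw [← zpow_natCast (Complex.exp ((x:ℂ) * Complex.I)) (m + N).toNat,
        Int.toNat_of_nonneg (by omega)]
      rw [mul_comm (t m), ← mul_assoc, zpow_add₀ hz]
      ring
    unfold Polynomial.IsRoot
    rw [this, h x, mul_zero]
  have hinf : {z : ℂ | p.IsRoot z}.Infinite := by
    have hinj : Set.InjOn (fun x : ℝ => Complex.exp ((x:ℂ) * Complex.I)) (Set.Ioo 0 1) := by
      intro u hu v hv huv
      simp only at huv
      rw [Complex.exp_eq_exp_iff_exists_int] at huv
      obtain ⟨n, hn⟩ := huv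
      have hre : (u : ℝ) = v + n * (2 * Real.pi) := by
        have := congrArg Complex.im hn
        simpa using this
      simp only [Set.mem_Ioo] at hu hv
      have hpi3 : (3:ℝ) ≤ Real.pi := Real.pi_gt_three.le
      have : n = 0 := by
        rcases lt_trichotomy n 0 with h|h|h
        · exfalso
          have : (n : ℝ) ≤ -1 := by exact_mod_cast (by omega : n ≤ -1)
          nlinarith [Real.pi_pos]
        · exact h
        · exfalso
          have : (1 : ℝ) ≤ (n : ℝ) := by exact_mod_cast h
          nlinarith [Real.pi_pos]
      rw [this] at hre; push_cast at hre; linarith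
    have : ((fun x : ℝ => Complex.exp ((x:ℂ) * Complex.I)) '' (Set.Ioo 0 1)).Infinite :=
      Set.Infinite.image hinj (Set.Ioo_infinite (by norm_num))
    apply this.mono
    rintro z ⟨x, _, rfl⟩
    exact hroot x
  have hp0 : p = 0 := Polynomial.eq_zero_of_infinite_isRoot p hinf
  intro m hm
  simp only [Finset.mem_Icc] at hm
  have := congrArg (fun q => Polynomial.coeff q (m + N).toNat) hp0
  simp only [hp, Polynomial.finset_sum_coeff, Polynomial.coeff_zero] at this
  rw [Finset.sum_eq_single m] at this
  · simpa [Polynomial.coeff_C_mul, Polynomial.coeff_X_pow] using this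
  · intro k hk hkm
    simp only [Finset.mem_Icc] at hk
    rw [Polynomial.coeff_C_mul, Polynomial.coeff_X_pow, if_neg (by omega), mul_zero]
  · intro hmm
    exact absurd (Finset.mem_Icc.2 hm) hmm

/-! ### Convolution and the top coefficient -/

lemma S_mul (N : ℕ) (u v : ℤ → ℂ) (hv : ∀ k : ℤ, (N : ℤ) < |k| → v k = 0) (x : ℝ) :
    S N u x * S N v x
      = ∑ m ∈ Finset.Icc (-(2 * N : ℤ)) (2 * N),
          (∑ j ∈ Finset.Icc (-(N : ℤ)) N, u j * v (m - j)) * Ef m x := by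
  unfold S
  rw [Finset.sum_mul]
  have key : ∀ j ∈ Finset.Icc (-(N : ℤ)) N,
      u j * Ef j x * (∑ k ∈ Finset.Icc (-(N : ℤ)) N, v k * Ef k x)
        = ∑ m ∈ Finset.Icc (-(2 * N : ℤ)) (2 * N), u j * v (m - j) * Ef m x := by
    intro j hj
    simp only [Finset.mem_Icc] at hj
    rw [Finset.mul_sum]
    have h1 : ∀ k ∈ Finset.Icc (-(N : ℤ)) N,
        u j * Ef j x * (v k * Ef k x) = u j * v ((k + j) - j) * Ef (k + j) x := by
      intro k _
      rw [Ef_add]; ring_nf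
    rw [Finset.sum_congr rfl h1, ← sum_Icc_shift (-(N:ℤ)) N j (fun m => u j * v (m - j) * Ef m x)]
    apply Finset.sum_subset
    · intro m hm
      simp only [Finset.mem_Icc] at hm ⊢
      omega
    · intro m hm hm'
      simp only [Finset.mem_Icc] at hm hm'
      rw [hv (m - j) (by rcases abs_cases (m - j) with ⟨h1,h2⟩|⟨h1,h2⟩ <;> omega)]
      ring
  rw [Finset.sum_congr rfl key, Finset.sum_comm]
  exact Finset.sum_congr rfl fun m _ => by rw [Finset.sum_mul]

lemma top_coeff (N : ℕ) (hN : 0 < N) (c s : ℤ → ℂ)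
    (hc : ∀ j : ℤ, (N : ℤ) < |j| → c j = 0)
    (hs : ∀ j : ℤ, (N : ℤ) < |j| → s j = 0)
    (hnorm : ∀ x : ℝ, S N c x * (starRingEnd ℂ) (S N c x)
      + S N s x * (starRingEnd ℂ) (S N s x) = 1) :
    c N * (starRingEnd ℂ) (c (-(N:ℤ))) + s N * (starRingEnd ℂ) (s (-(N:ℤ))) = 0 := by
  classical
  set cd : ℤ → ℂ := fun k => (starRingEnd ℂ) (c (-k)) with hcd
  set sd : ℤ → ℂ := fun k => (starRingEnd ℂ) (s (-k)) with hsd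
  have hcd0 : ∀ k : ℤ, (N : ℤ) < |k| → cd k = 0 := by
    intro k hk; simp only [hcd]; rw [hc (-k) (by rwa [abs_neg]), map_zero]
  have hsd0 : ∀ k : ℤ, (N : ℤ) < |k| → sd k = 0 := by
    intro k hk; simp only [hsd]; rw [hs (-k) (by rwa [abs_neg]), map_zero]
  set T : ℤ → ℂ := fun m =>
    (∑ j ∈ Finset.Icc (-(N : ℤ)) N, (c j * cd (m - j) + s j * sd (m - j)))
      - (if m = 0 then 1 else 0) with hT
  have hTsum : ∀ x : ℝ, ∑ m ∈ Finset.Icc (-(2 * N : ℤ)) (2 * N), T m * Ef m x = 0 := by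
    intro x
    have expand : ∀ m ∈ Finset.Icc (-(2 * N : ℤ)) (2 * N),
        T m * Ef m x
          = (∑ j ∈ Finset.Icc (-(N : ℤ)) N, c j * cd (m - j)) * Ef m x
            + (∑ j ∈ Finset.Icc (-(N : ℤ)) N, s j * sd (m - j)) * Ef m x
            - (if m = 0 then Ef m x else 0) := by
      intro m _
      simp only [hT]
      rw [Finset.sum_add_distrib]
      split_ifs <;> ring
    rw [Finset.sum_congr rfl expand]
    rw [Finset.sum_sub_distrib, Finset.sum_add_distrib]
    rw [← S_mul N c cd hcd0 x, ← S_mul N s sd hsd0 x]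
    rw [Finset.sum_ite_eq' (Finset.Icc (-(2 * N : ℤ)) (2 * N)) 0 (fun m => Ef m x)]
    rw [if_pos (by simp only [Finset.mem_Icc]; omega), Ef_zero]
    rw [← conj_S, ← conj_S, hnorm x]
    ring
  have hcast : ((2 * N : ℕ) : ℤ) = 2 * (N : ℤ) := by push_cast; ring
  have hTsum' : ∀ x : ℝ, ∑ m ∈ Finset.Icc (-((2*N : ℕ) : ℤ)) ((2*N : ℕ) : ℤ), T m * Ef m x = 0 := by
    intro x; rw [hcast]; exact hTsum x
  have hT2N : T (2 * (N:ℤ)) = 0 := by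
    rw [← hcast]
    exact coeff_zero (2 * N) T hTsum' ((2*N : ℕ) : ℤ)
      (by simp only [Finset.mem_Icc]; omega)
  have collapse : T (2 * (N:ℤ)) = c N * cd N + s N * sd N - 0 := by
    simp only [hT]
    congr 1
    · rw [Finset.sum_eq_single (N : ℤ)]
      · rw [show (2 * (N:ℤ) - N) = (N:ℤ) by ring]
      · intro j hj hjN
        simp only [Finset.mem_Icc] at hj
        rw [hcd0 (2 * N - j) (by rcases abs_cases ((2*N:ℤ) - j) with ⟨h1,h2⟩|⟨h1,h2⟩ <;> omega),
          hsd0 (2 * N - j) (by rcases abs_cases ((2*N:ℤ) - j) with ⟨h1,h2⟩|⟨h1,h2⟩ <;> omega)]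
        ring
      · intro hN; exact absurd (Finset.mem_Icc.2 (by omega)) hN
    · rw [if_neg (by omega)]
  rw [hT2N, sub_zero] at collapse
  simp only [hcd, hsd] at collapse
  linear_combination -collapse

lemma S_mul_shift (N : ℕ) (u : ℤ → ℂ) (hu : ∀ j : ℤ, (N : ℤ) < |j| → u j = 0)
    (x : ℝ) (ε : ℤ) (hε : ε = 1 ∨ ε = -1) :
    S N u x * Ef ε x
      = ∑ m ∈ Finset.Icc (-(N : ℤ) - 1) ((N : ℤ) + 1), u (m - ε) * Ef m x := by
  unfold S
  rw [Finset.sum_mul]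
  have h1 : ∀ j ∈ Finset.Icc (-(N : ℤ)) N,
      u j * Ef j x * Ef ε x = u ((j + ε) - ε) * Ef (j + ε) x := by
    intro j _
    rw [Ef_add]
    ring_nf
  rw [Finset.sum_congr rfl h1,
    ← sum_Icc_shift (-(N : ℤ)) N ε (fun m => u (m - ε) * Ef m x)]
  apply Finset.sum_subset
  · intro m hm
    simp only [Finset.mem_Icc] at hm ⊢
    omega
  · intro m hm hm'
    simp only [Finset.mem_Icc] at hm hm'
    rw [hu (m - ε) (by rcases abs_cases (m - ε) with ⟨h1,h2⟩|⟨h1,h2⟩ <;> omega), zero_mul]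

/-! ### Matrix lemmas -/

lemma Mqsp_zero (Φ : Fin 1 → ℝ) (x : ℝ) : Mqsp 0 Φ x = Zgate (Φ 0) := by
  simp [Mqsp]

lemma Mqsp_succ (d : ℕ) (Φ : Fin (d + 2) → ℝ) (x : ℝ) :
    Mqsp (d + 1) Φ x
      = Mqsp d (fun k => Φ k.castSucc) x * (Wgate x * Zgate (Φ (Fin.last (d + 1)))) := by
  unfold Mqsp
  rw [List.ofFn_succ']
  rw [List.prod_concat]
  rw [← mul_assoc]
  simp only [Fin.succ_castSucc, Fin.succ_last, Fin.castSucc_zero]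

lemma Zgate_matrix (φ : ℝ) :
    Zgate φ = !![Complex.exp ((φ : ℂ) * Complex.I), 0;
      0, (starRingEnd ℂ) (Complex.exp ((φ : ℂ) * Complex.I))] := by
  unfold Zgate
  congr 1
  rw [← Complex.exp_conj]
  congr 1
  simp

lemma WZ_cancel (x : ℝ) :
    (Wgate x * Zgate (Real.pi / 2)) * (Wgate x * Zgate (3 * Real.pi / 2)) = 1 := by
  have e1 : Complex.exp ((↑(Real.pi / 2) : ℂ) * Complex.I) = Complex.I := by
    push_cast
    rw [Complex.exp_mul_I]
    rw [show ((Real.pi : ℂ) / 2) = ((Real.pi / 2 : ℝ) : ℂ) by push_cast; ring]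
    rw [← Complex.ofReal_cos, ← Complex.ofReal_sin]
    simp [Real.cos_pi_div_two, Real.sin_pi_div_two]
  have e1' : Complex.exp (-(↑(Real.pi / 2) : ℂ) * Complex.I) = -Complex.I := by
    rw [show (-(↑(Real.pi / 2) : ℂ) * Complex.I) = -((↑(Real.pi / 2) : ℂ) * Complex.I) by ring]
    rw [Complex.exp_neg, e1, Complex.inv_I]
  have e2 : Complex.exp ((↑(3 * Real.pi / 2) : ℂ) * Complex.I) = -Complex.I := by
    rw [show ((↑(3 * Real.pi / 2) : ℂ) * Complex.I)
        = (Real.pi : ℂ) * Complex.I + (↑(Real.pi / 2) : ℂ) * Complex.I by push_cast; ring]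
    rw [Complex.exp_add, Complex.exp_pi_mul_I, e1]
    ring
  have e2' : Complex.exp (-(↑(3 * Real.pi / 2) : ℂ) * Complex.I) = Complex.I := by
    rw [show (-(↑(3 * Real.pi / 2) : ℂ) * Complex.I)
        = -((↑(3 * Real.pi / 2) : ℂ) * Complex.I) by ring]
    rw [Complex.exp_neg, e2, inv_neg, Complex.inv_I, neg_neg]
  have pyth : (Complex.cos x) ^ 2 + (Complex.sin x) ^ 2 = 1 := Complex.cos_sq_add_sin_sq x
  have hI : Complex.I ^ 2 = -1 := Complex.I_sq
  unfold Wgate Zgate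
  rw [e1, e1', e2, e2']
  ext i j
  fin_cases i <;> fin_cases j
  · simp [Matrix.mul_apply, Fin.sum_univ_two, Matrix.one_apply,
      Complex.ofReal_cos, Complex.ofReal_sin]
    linear_combination pyth + (-Complex.cos (x:ℂ) ^ 2 + Complex.sin (x:ℂ) ^ 2 * (Complex.I ^ 2 - 1)) * hI
  · simp [Matrix.mul_apply, Fin.sum_univ_two, Matrix.one_apply,
      Complex.ofReal_cos, Complex.ofReal_sin]
    ring
  · simp [Matrix.mul_apply, Fin.sum_univ_two, Matrix.one_apply,
      Complex.ofReal_cos, Complex.ofReal_sin]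
    ring
  · simp [Matrix.mul_apply, Fin.sum_univ_two, Matrix.one_apply,
      Complex.ofReal_cos, Complex.ofReal_sin]
    linear_combination pyth + (-Complex.cos (x:ℂ) ^ 2 + Complex.sin (x:ℂ) ^ 2 * (Complex.I ^ 2 - 1)) * hI

/-! ### The core induction -/

theorem core : ∀ D : ℕ, ∀ c s : ℤ → ℂ,
    (∀ j : ℤ, (D : ℤ) < |j| → c j = 0) →
    (∀ j : ℤ, (D : ℤ) < |j| → s j = 0) →
    (∀ j : ℤ, c (-j) = c j) →
    (∀ j : ℤ, s (-j) = -s j) →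
    (∀ j : ℤ, (j + (D : ℤ)) % 2 ≠ 0 → c j = 0) →
    (∀ j : ℤ, (j + (D : ℤ)) % 2 ≠ 0 → s j = 0) →
    (∀ x : ℝ, S D c x * (starRingEnd ℂ) (S D c x)
        + S D s x * (starRingEnd ℂ) (S D s x) = 1) →
    ∃ Φ : Fin (D + 1) → ℝ, ∀ x : ℝ,
      Mqsp D Φ x = !![S D c x, S D s x;
        -(starRingEnd ℂ) (S D s x), (starRingEnd ℂ) (S D c x)] := by
  intro D
  induction D using Nat.strong_induction_on with
  | _ D IH =>
  intro c s hc hs hce hso hcp hsp hnorm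
  cases D with
  | zero =>
    -- base case
    have hs0 : s 0 = 0 := by
      have h := hso 0
      rw [neg_zero] at h
      linear_combination h / 2
    have hSs : ∀ x : ℝ, S 0 s x = 0 := by
      intro x; simp [S, hs0]
    have hSc : ∀ x : ℝ, S 0 c x = c 0 := by
      intro x; simp [S, Ef_zero]
    have hc1 : c 0 * (starRingEnd ℂ) (c 0) = 1 := by
      have h := hnorm 0
      rw [hSs, hSc] at h
      simpa using h
    have habs : ‖c 0‖ = 1 := by
      rw [Complex.mul_conj] at hc1
      have : Complex.normSq (c 0) = 1 := by exact_mod_cast hc1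
      rw [Complex.norm_def, this, Real.sqrt_one]
    have hexp : Complex.exp (((c 0).arg : ℂ) * Complex.I) = c 0 := by
      have h := Complex.norm_mul_exp_arg_mul_I (c 0)
      rw [habs] at h
      simpa using h
    refine ⟨fun _ => (c 0).arg, fun x => ?_⟩
    rw [Mqsp_zero, Zgate_matrix, hexp, hSc x, hSs x]
    simp
  | succ E =>
  by_cases hAB : c ((E + 1 : ℕ) : ℤ) = 0 ∧ s ((E + 1 : ℕ) : ℤ) = 0
  · -- Case A : both top coefficients vanish
    obtain ⟨hcT, hsT⟩ := hAB
    cases E with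
    | zero =>
      exfalso
      have czero : ∀ j : ℤ, c j = 0 := by
        intro j
        rcases (by omega : j < -1 ∨ j = -1 ∨ j = 0 ∨ j = 1 ∨ 1 < j) with h|h|h|h|h
        · exact hc j (by rcases abs_cases j with ⟨h1,h2⟩|⟨h1,h2⟩ <;> omega)
        · subst h
          have := hce 1
          rw [this]
          exact_mod_cast hcT
        · subst h; exact hcp 0 (by omega)
        · subst h; exact_mod_cast hcT
        · exact hc j (by rcases abs_cases j with ⟨h1,h2⟩|⟨h1,h2⟩ <;> omega)
      have szero : ∀ j : ℤ, s j = 0 := by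
        intro j
        rcases (by omega : j < -1 ∨ j = -1 ∨ j = 0 ∨ j = 1 ∨ 1 < j) with h|h|h|h|h
        · exact hs j (by rcases abs_cases j with ⟨h1,h2⟩|⟨h1,h2⟩ <;> omega)
        · subst h
          have h2 := hso 1
          rw [h2, show s ((0+1:ℕ):ℤ) = s 1 by norm_num] at *
          rw [hsT, neg_zero]
        · subst h; exact hsp 0 (by omega)
        · subst h; exact_mod_cast hsT
        · exact hs j (by rcases abs_cases j with ⟨h1,h2⟩|⟨h1,h2⟩ <;> omega)
      have h := hnorm 0
      rw [show S (0+1) c 0 = 0 from Finset.sum_eq_zero fun j _ => by rw [czero j, zero_mul],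
        show S (0+1) s 0 = 0 from Finset.sum_eq_zero fun j _ => by rw [szero j, zero_mul]] at h
      simp at h
    | succ F =>
      -- degree drops by two
      have hcpos : ∀ j : ℤ, (F : ℤ) < j → c j = 0 := by
        intro j hFj
        rcases (by omega : j = (F:ℤ)+1 ∨ j = (F:ℤ)+2 ∨ (F:ℤ)+2 < j) with h|h|h
        · exact hcp j (by omega)
        · subst h
          rw [show ((F:ℤ)+2) = ((F+1+1:ℕ):ℤ) by push_cast; ring]
          exact hcT
        · exact hc j (by rcases abs_cases j with ⟨h1,h2⟩|⟨h1,h2⟩ <;> omega)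
      have hspos : ∀ j : ℤ, (F : ℤ) < j → s j = 0 := by
        intro j hFj
        rcases (by omega : j = (F:ℤ)+1 ∨ j = (F:ℤ)+2 ∨ (F:ℤ)+2 < j) with h|h|h
        · exact hsp j (by omega)
        · subst h
          rw [show ((F:ℤ)+2) = ((F+1+1:ℕ):ℤ) by push_cast; ring]
          exact hsT
        · exact hs j (by rcases abs_cases j with ⟨h1,h2⟩|⟨h1,h2⟩ <;> omega)
      have hc' : ∀ j : ℤ, (F : ℤ) < |j| → c j = 0 := by
        intro j hj
        rcases le_or_gt 0 j with h0|h0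
        · exact hcpos j (by rcases abs_cases j with ⟨h1,h2⟩|⟨h1,h2⟩ <;> omega)
        · have h := hce (-j)
          rw [neg_neg] at h
          rw [h]
          exact hcpos (-j) (by rcases abs_cases j with ⟨h1,h2⟩|⟨h1,h2⟩ <;> omega)
      have hs' : ∀ j : ℤ, (F : ℤ) < |j| → s j = 0 := by
        intro j hj
        rcases le_or_gt 0 j with h0|h0
        · exact hspos j (by rcases abs_cases j with ⟨h1,h2⟩|⟨h1,h2⟩ <;> omega)
        · have h := hso (-j)
          rw [neg_neg] at h
          rw [h, hspos (-j) (by rcases abs_cases j with ⟨h1,h2⟩|⟨h1,h2⟩ <;> omega), neg_zero]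
      have hcp' : ∀ j : ℤ, (j + (F : ℤ)) % 2 ≠ 0 → c j = 0 := fun j hj => hcp j (by omega)
      have hsp' : ∀ j : ℤ, (j + (F : ℤ)) % 2 ≠ 0 → s j = 0 := fun j hj => hsp j (by omega)
      have hnorm' : ∀ x : ℝ, S F c x * (starRingEnd ℂ) (S F c x)
          + S F s x * (starRingEnd ℂ) (S F s x) = 1 := by
        intro x
        rw [S_extend F (F+1+1) c (by omega) hc' x, S_extend F (F+1+1) s (by omega) hs' x]
        exact hnorm x
      obtain ⟨Φ', hΦ'⟩ := IH F (by omega) c s hc' hs' hce hso hcp' hsp' hnorm'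
      refine ⟨Fin.snoc (Fin.snoc Φ' (Real.pi/2)) (3*Real.pi/2), fun x => ?_⟩
      have key : Mqsp (F+1+1) (Fin.snoc (Fin.snoc Φ' (Real.pi/2)) (3*Real.pi/2)) x
          = Mqsp F Φ' x := by
        rw [Mqsp_succ (F+1) _ x, Mqsp_succ F _ x]
        simp only [Fin.snoc_castSucc, Fin.snoc_last]
        rw [mul_assoc, WZ_cancel, mul_one]
      rw [key, hΦ' x, S_extend F (F+1+1) c (by omega) hc' x,
        S_extend F (F+1+1) s (by omega) hs' x]
  · -- Case B : the top coefficients do not vanish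
    have htop := top_coeff (E+1) (Nat.succ_pos E) c s hc hs hnorm
    rw [hce ((E+1:ℕ):ℤ), hso ((E+1:ℕ):ℤ), map_neg] at htop
    have hcs : c ((E+1:ℕ):ℤ) * (starRingEnd ℂ) (c ((E+1:ℕ):ℤ))
        = s ((E+1:ℕ):ℤ) * (starRingEnd ℂ) (s ((E+1:ℕ):ℤ)) := by
      linear_combination htop
    have hnormSq : Complex.normSq (c ((E+1:ℕ):ℤ)) = Complex.normSq (s ((E+1:ℕ):ℤ)) := by
      have h := hcs
      rw [Complex.mul_conj, Complex.mul_conj] at h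
      exact_mod_cast h
    have hsT : s ((E+1:ℕ):ℤ) ≠ 0 := by
      intro h0
      apply hAB
      refine ⟨?_, h0⟩
      have : Complex.normSq (c ((E+1:ℕ):ℤ)) = 0 := by rw [hnormSq, h0]; simp
      exact Complex.normSq_eq_zero.1 this
    have habs : ‖c ((E+1:ℕ):ℤ)‖ = ‖s ((E+1:ℕ):ℤ)‖ := by
      rw [Complex.norm_def, Complex.norm_def, hnormSq]
    have hu : Complex.exp ((((c ((E+1:ℕ):ℤ) / s ((E+1:ℕ):ℤ)).arg : ℝ) : ℂ) * Complex.I)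
        = c ((E+1:ℕ):ℤ) / s ((E+1:ℕ):ℤ) := by
      have h1 : ‖c ((E+1:ℕ):ℤ) / s ((E+1:ℕ):ℤ)‖ = 1 := by
        rw [norm_div, habs, div_self (norm_ne_zero_iff.mpr hsT)]
      have h := Complex.norm_mul_exp_arg_mul_I (c ((E+1:ℕ):ℤ) / s ((E+1:ℕ):ℤ))
      rw [h1] at h
      simpa using h
    set ψ : ℝ := (c ((E+1:ℕ):ℤ) / s ((E+1:ℕ):ℤ)).arg with hψdef
    set φ : ℝ := ψ / 2 with hφdef
    set e₁ : ℂ := Complex.exp ((φ:ℂ) * Complex.I) with he₁def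
    set e₂ : ℂ := Complex.exp (-(φ:ℂ) * Complex.I) with he₂def
    have he : e₁ * e₂ = 1 := by
      rw [he₁def, he₂def, ← Complex.exp_add,
        show (φ:ℂ) * Complex.I + -(φ:ℂ) * Complex.I = 0 by ring, Complex.exp_zero]
    have he₁sq : e₁ * e₁ = c ((E+1:ℕ):ℤ) / s ((E+1:ℕ):ℤ) := by
      rw [he₁def, ← Complex.exp_add,
        show (φ:ℂ) * Complex.I + (φ:ℂ) * Complex.I = (ψ:ℂ) * Complex.I by
          rw [hφdef]; push_cast; ring]
      exact hu
    have hkey : e₂ * c ((E+1:ℕ):ℤ) = e₁ * s ((E+1:ℕ):ℤ) := by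
      have h2 : c ((E+1:ℕ):ℤ) = e₁ * e₁ * s ((E+1:ℕ):ℤ) := by
        rw [he₁sq, div_mul_cancel₀ _ hsT]
      rw [h2]
      linear_combination (e₁ * s ((E+1:ℕ):ℤ)) * he
    have hconj₁ : (starRingEnd ℂ) e₁ = e₂ := by
      rw [he₁def, he₂def, ← Complex.exp_conj]
      congr 1
      rw [_root_.map_mul, Complex.conj_I, Complex.conj_ofReal]
      ring
    have hconj₂ : (starRingEnd ℂ) e₂ = e₁ := by
      rw [he₁def, he₂def, ← Complex.exp_conj]
      congr 1
      rw [show (-(φ:ℂ) * Complex.I) = (φ:ℂ) * (-Complex.I) by ring, _root_.map_mul, map_neg,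
        Complex.conj_I, Complex.conj_ofReal]
      ring
    -- the reduced coefficient sequences
    set c' : ℤ → ℂ := fun j =>
      (e₂ * (c (j-1) + c (j+1)) + e₁ * (s (j+1) - s (j-1))) / 2 with hc'def
    set s' : ℤ → ℂ := fun j =>
      (e₂ * (c (j+1) - c (j-1)) + e₁ * (s (j+1) + s (j-1))) / 2 with hs'def
    -- handy vanishing facts
    have hcbig : ∀ t : ℤ, ((E:ℤ)+1 < t ∨ t < -((E:ℤ)+1)) → c t = 0 := by
      intro t ht
      apply hc
      rcases abs_cases t with ⟨h1,h2⟩|⟨h1,h2⟩ <;> rw [h1] <;> push_cast <;> omega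
    have hsbig : ∀ t : ℤ, ((E:ℤ)+1 < t ∨ t < -((E:ℤ)+1)) → s t = 0 := by
      intro t ht
      apply hs
      rcases abs_cases t with ⟨h1,h2⟩|⟨h1,h2⟩ <;> rw [h1] <;> push_cast <;> omega
    have zcE : c (E:ℤ) = 0 := hcp (E:ℤ) (by omega)
    have zcEn : c (-(E:ℤ)) = 0 := by rw [hce]; exact zcE
    have zsE : s (E:ℤ) = 0 := hsp (E:ℤ) (by omega)
    have zsEn : s (-(E:ℤ)) = 0 := by rw [hso, zsE, neg_zero]
    have zcE2 : c ((E:ℤ)+2) = 0 := hcbig _ (by omega)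
    have zcE2n : c (-((E:ℤ)+2)) = 0 := hcbig _ (by omega)
    have zsE2 : s ((E:ℤ)+2) = 0 := hsbig _ (by omega)
    have zsE2n : s (-((E:ℤ)+2)) = 0 := hsbig _ (by omega)
    have hceN : c (-((E:ℤ)+1)) = c ((E:ℤ)+1) := by
      have := hce ((E:ℤ)+1); exact this
    have hsoN : s (-((E:ℤ)+1)) = -s ((E:ℤ)+1) := hso ((E:ℤ)+1)
    have hkey' : e₂ * c ((E:ℤ)+1) = e₁ * s ((E:ℤ)+1) := by
      rw [show ((E:ℤ)+1) = ((E+1:ℕ):ℤ) by push_cast; ring]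
      exact hkey
    -- support of the new coefficients
    have hc'supp : ∀ j : ℤ, (E : ℤ) < |j| → c' j = 0 := by
      intro j hj
      have hj' : (E:ℤ) < j ∨ j < -(E:ℤ) := by
        rcases abs_cases j with ⟨h1,h2⟩|⟨h1,h2⟩ <;> omega
      simp only [hc'def]
      rcases (by omega : j = (E:ℤ)+1 ∨ j = -((E:ℤ)+1) ∨ j = (E:ℤ)+2 ∨ j = -((E:ℤ)+2)
          ∨ ((E:ℤ)+2 < j ∨ j < -((E:ℤ)+2))) with h|h|h|h|h
      · subst h
        rw [show (E:ℤ)+1-1 = (E:ℤ) by ring, show (E:ℤ)+1+1 = (E:ℤ)+2 by ring,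
          zcE, zcE2, zsE, zsE2]
        ring
      · subst h
        rw [show -((E:ℤ)+1)-1 = -((E:ℤ)+2) by ring, show -((E:ℤ)+1)+1 = -(E:ℤ) by ring,
          zcE2n, zcEn, zsE2n, zsEn]
        ring
      · subst h
        rw [show (E:ℤ)+2-1 = (E:ℤ)+1 by ring, show (E:ℤ)+2+1 = (E:ℤ)+3 by ring,
          hcbig ((E:ℤ)+3) (by omega), hsbig ((E:ℤ)+3) (by omega)]
        linear_combination hkey' / 2
      · subst h
        rw [show -((E:ℤ)+2)-1 = -((E:ℤ)+3) by ring, show -((E:ℤ)+2)+1 = -((E:ℤ)+1) by ring,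
          hcbig (-((E:ℤ)+3)) (by omega), hsbig (-((E:ℤ)+3)) (by omega), hceN, hsoN]
        linear_combination hkey' / 2
      · rw [hcbig (j-1) (by omega), hcbig (j+1) (by omega),
          hsbig (j-1) (by omega), hsbig (j+1) (by omega)]
        ring
    have hs'supp : ∀ j : ℤ, (E : ℤ) < |j| → s' j = 0 := by
      intro j hj
      have hj' : (E:ℤ) < j ∨ j < -(E:ℤ) := by
        rcases abs_cases j with ⟨h1,h2⟩|⟨h1,h2⟩ <;> omega
      simp only [hs'def]
      rcases (by omega : j = (E:ℤ)+1 ∨ j = -((E:ℤ)+1) ∨ j = (E:ℤ)+2 ∨ j = -((E:ℤ)+2)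
          ∨ ((E:ℤ)+2 < j ∨ j < -((E:ℤ)+2))) with h|h|h|h|h
      · subst h
        rw [show (E:ℤ)+1-1 = (E:ℤ) by ring, show (E:ℤ)+1+1 = (E:ℤ)+2 by ring,
          zcE, zcE2, zsE, zsE2]
        ring
      · subst h
        rw [show -((E:ℤ)+1)-1 = -((E:ℤ)+2) by ring, show -((E:ℤ)+1)+1 = -(E:ℤ) by ring,
          zcE2n, zcEn, zsE2n, zsEn]
        ring
      · subst h
        rw [show (E:ℤ)+2-1 = (E:ℤ)+1 by ring, show (E:ℤ)+2+1 = (E:ℤ)+3 by ring,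
          hcbig ((E:ℤ)+3) (by omega), hsbig ((E:ℤ)+3) (by omega)]
        linear_combination -hkey' / 2
      · subst h
        rw [show -((E:ℤ)+2)-1 = -((E:ℤ)+3) by ring, show -((E:ℤ)+2)+1 = -((E:ℤ)+1) by ring,
          hcbig (-((E:ℤ)+3)) (by omega), hsbig (-((E:ℤ)+3)) (by omega), hceN, hsoN]
        linear_combination hkey' / 2
      · rw [hcbig (j-1) (by omega), hcbig (j+1) (by omega),
          hsbig (j-1) (by omega), hsbig (j+1) (by omega)]
        ring
    -- symmetry of the new coefficients
    have hc'e : ∀ j : ℤ, c' (-j) = c' j := by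
      intro j
      simp only [hc'def]
      have a1 : c (-j-1) = c (j+1) := by
        rw [show -j-1 = -(j+1) by ring]; exact hce (j+1)
      have a2 : c (-j+1) = c (j-1) := by
        rw [show -j+1 = -(j-1) by ring]; exact hce (j-1)
      have a3 : s (-j-1) = -s (j+1) := by
        rw [show -j-1 = -(j+1) by ring]; exact hso (j+1)
      have a4 : s (-j+1) = -s (j-1) := by
        rw [show -j+1 = -(j-1) by ring]; exact hso (j-1)
      rw [a1, a2, a3, a4]
      ring
    have hs'o : ∀ j : ℤ, s' (-j) = -s' j := by
      intro j
      simp only [hs'def]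
      have a1 : c (-j-1) = c (j+1) := by
        rw [show -j-1 = -(j+1) by ring]; exact hce (j+1)
      have a2 : c (-j+1) = c (j-1) := by
        rw [show -j+1 = -(j-1) by ring]; exact hce (j-1)
      have a3 : s (-j-1) = -s (j+1) := by
        rw [show -j-1 = -(j+1) by ring]; exact hso (j+1)
      have a4 : s (-j+1) = -s (j-1) := by
        rw [show -j+1 = -(j-1) by ring]; exact hso (j-1)
      rw [a1, a2, a3, a4]
      ring
    -- parity of the new coefficients
    have hc'p : ∀ j : ℤ, (j + (E : ℤ)) % 2 ≠ 0 → c' j = 0 := by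
      intro j hj
      simp only [hc'def]
      rw [hcp (j-1) (by omega), hcp (j+1) (by omega),
        hsp (j-1) (by omega), hsp (j+1) (by omega)]
      ring
    have hs'p : ∀ j : ℤ, (j + (E : ℤ)) % 2 ≠ 0 → s' j = 0 := by
      intro j hj
      simp only [hs'def]
      rw [hcp (j-1) (by omega), hcp (j+1) (by omega),
        hsp (j-1) (by omega), hsp (j+1) (by omega)]
      ring
    -- the functional identities
    have hI₁ : ∀ x : ℝ, S E c' x
        = (e₂ * S (E+1) c x * (Ef 1 x + Ef (-1) x)
          + e₁ * S (E+1) s x * (Ef (-1) x - Ef 1 x)) / 2 := by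
      intro x
      have m1 := S_mul_shift (E+1) c hc x 1 (Or.inl rfl)
      have m2 := S_mul_shift (E+1) c hc x (-1) (Or.inr rfl)
      have m3 := S_mul_shift (E+1) s hs x 1 (Or.inl rfl)
      have m4 := S_mul_shift (E+1) s hs x (-1) (Or.inr rfl)
      have hL : S E c' x
          = ∑ m ∈ Finset.Icc (-((E+1:ℕ):ℤ) - 1) (((E+1:ℕ):ℤ) + 1), c' m * Ef m x := by
        rw [S_extend E (E+2) c' (by omega) hc'supp x]
        show (∑ j ∈ Finset.Icc (-((E+2:ℕ):ℤ)) ((E+2:ℕ):ℤ), c' j * Ef j x) = _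
        rw [show (-((E+2:ℕ):ℤ)) = -((E+1:ℕ):ℤ) - 1 by push_cast; ring,
          show ((E+2:ℕ):ℤ) = ((E+1:ℕ):ℤ) + 1 by push_cast; ring]
      have hR : (e₂ * S (E+1) c x * (Ef 1 x + Ef (-1) x)
            + e₁ * S (E+1) s x * (Ef (-1) x - Ef 1 x)) / 2
          = ∑ m ∈ Finset.Icc (-((E+1:ℕ):ℤ) - 1) (((E+1:ℕ):ℤ) + 1), c' m * Ef m x := by
        calc (e₂ * S (E+1) c x * (Ef 1 x + Ef (-1) x)
              + e₁ * S (E+1) s x * (Ef (-1) x - Ef 1 x)) / 2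
            = (e₂ * (S (E+1) c x * Ef 1 x) + e₂ * (S (E+1) c x * Ef (-1) x)
              + e₁ * (S (E+1) s x * Ef (-1) x) - e₁ * (S (E+1) s x * Ef 1 x)) / 2 := by
              ring
          _ = _ := by
              rw [m1, m2, m3, m4, Finset.mul_sum, Finset.mul_sum, Finset.mul_sum,
                Finset.mul_sum, ← Finset.sum_add_distrib, ← Finset.sum_add_distrib,
                ← Finset.sum_sub_distrib, Finset.sum_div]
              refine Finset.sum_congr rfl fun m _ => ?_
              rw [show m - (-1) = m + 1 by ring]
              simp only [hc'def]
              ring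
      rw [hL, hR]
    have hI₂ : ∀ x : ℝ, S E s' x
        = (e₂ * S (E+1) c x * (Ef (-1) x - Ef 1 x)
          + e₁ * S (E+1) s x * (Ef 1 x + Ef (-1) x)) / 2 := by
      intro x
      have m1 := S_mul_shift (E+1) c hc x 1 (Or.inl rfl)
      have m2 := S_mul_shift (E+1) c hc x (-1) (Or.inr rfl)
      have m3 := S_mul_shift (E+1) s hs x 1 (Or.inl rfl)
      have m4 := S_mul_shift (E+1) s hs x (-1) (Or.inr rfl)
      have hL : S E s' x
          = ∑ m ∈ Finset.Icc (-((E+1:ℕ):ℤ) - 1) (((E+1:ℕ):ℤ) + 1), s' m * Ef m x := by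
        rw [S_extend E (E+2) s' (by omega) hs'supp x]
        show (∑ j ∈ Finset.Icc (-((E+2:ℕ):ℤ)) ((E+2:ℕ):ℤ), s' j * Ef j x) = _
        rw [show (-((E+2:ℕ):ℤ)) = -((E+1:ℕ):ℤ) - 1 by push_cast; ring,
          show ((E+2:ℕ):ℤ) = ((E+1:ℕ):ℤ) + 1 by push_cast; ring]
      have hR : (e₂ * S (E+1) c x * (Ef (-1) x - Ef 1 x)
            + e₁ * S (E+1) s x * (Ef 1 x + Ef (-1) x)) / 2
          = ∑ m ∈ Finset.Icc (-((E+1:ℕ):ℤ) - 1) (((E+1:ℕ):ℤ) + 1), s' m * Ef m x := by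
        calc (e₂ * S (E+1) c x * (Ef (-1) x - Ef 1 x)
              + e₁ * S (E+1) s x * (Ef 1 x + Ef (-1) x)) / 2
            = (e₂ * (S (E+1) c x * Ef (-1) x) - e₂ * (S (E+1) c x * Ef 1 x)
              + e₁ * (S (E+1) s x * Ef 1 x) + e₁ * (S (E+1) s x * Ef (-1) x)) / 2 := by
              ring
          _ = _ := by
              rw [m1, m2, m3, m4, Finset.mul_sum, Finset.mul_sum, Finset.mul_sum,
                Finset.mul_sum, ← Finset.sum_sub_distrib, ← Finset.sum_add_distrib,
                ← Finset.sum_add_distrib, Finset.sum_div]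
              refine Finset.sum_congr rfl fun m _ => ?_
              rw [show m - (-1) = m + 1 by ring]
              simp only [hs'def]
              ring
      rw [hL, hR]
    -- the norm condition for the reduced data
    have hnorm' : ∀ x : ℝ, S E c' x * (starRingEnd ℂ) (S E c' x)
        + S E s' x * (starRingEnd ℂ) (S E s' x) = 1 := by
      intro x
      have J1 := congrArg (starRingEnd ℂ) (hI₁ x)
      have J2 := congrArg (starRingEnd ℂ) (hI₂ x)
      simp only [map_div₀, map_add, map_sub, _root_.map_mul, map_ofNat, conj_Ef,
        hconj₁, hconj₂, neg_neg] at J1 J2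
      rw [J1, J2, hI₁ x, hI₂ x]
      have hzw := Ef_mul_inv 1 x
      have hFG := hnorm x
      linear_combination (e₁ * e₂ * (Ef 1 x) * (Ef (-1) x)) * hFG
        + (e₁ * e₂) * hzw + he
    obtain ⟨Φ', hΦ'⟩ := IH E (by omega) c' s' hc'supp hs'supp hc'e hs'o hc'p hs'p hnorm'
    refine ⟨Fin.snoc Φ' φ, fun x => ?_⟩
    rw [Mqsp_succ E _ x]
    simp only [Fin.snoc_castSucc, Fin.snoc_last]
    rw [hΦ' x]
    have hz : Ef 1 x = Complex.cos x + Complex.sin x * Complex.I := by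
      unfold Ef
      rw [show ((1:ℤ):ℂ) * (x:ℂ) * Complex.I = (x:ℂ) * Complex.I by push_cast; ring,
        Complex.exp_mul_I]
    have hw : Ef (-1) x = Complex.cos x - Complex.sin x * Complex.I := by
      unfold Ef
      rw [show ((-1:ℤ):ℂ) * (x:ℂ) * Complex.I = (-(x:ℂ)) * Complex.I by push_cast; ring,
        Complex.exp_mul_I, Complex.cos_neg, Complex.sin_neg]
      ring
    have hcos : (Real.cos x : ℂ) = (Ef 1 x + Ef (-1) x) / 2 := by
      rw [hz, hw, Complex.ofReal_cos]; ring
    have hsin : (Real.sin x : ℂ) * Complex.I = (Ef 1 x - Ef (-1) x) / 2 := by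
      rw [hz, hw, Complex.ofReal_sin]; ring
    have hzw := Ef_mul_inv 1 x
    have WZm : Wgate x * Zgate φ
        = !![(Ef 1 x + Ef (-1) x)/2 * e₁, (Ef 1 x - Ef (-1) x)/2 * e₂;
             (Ef 1 x - Ef (-1) x)/2 * e₁, (Ef 1 x + Ef (-1) x)/2 * e₂] := by
      unfold Wgate Zgate
      rw [← he₁def, ← he₂def, Matrix.mul_fin_two, hcos, hsin]
      congr 1 <;> ring
    rw [WZm, Matrix.mul_fin_two]
    have J1 := congrArg (starRingEnd ℂ) (hI₁ x)
    have J2 := congrArg (starRingEnd ℂ) (hI₂ x)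
    simp only [map_div₀, map_add, map_sub, _root_.map_mul, map_ofNat, conj_Ef,
      hconj₁, hconj₂, neg_neg] at J1 J2
    ext i j
    fin_cases i <;> fin_cases j
    · simp only [Matrix.cons_val', Matrix.cons_val_zero, Matrix.empty_val',
        Matrix.cons_val_fin_one, Matrix.cons_val_one, Matrix.head_cons, Matrix.head_fin_const,
        Fin.zero_eta, Fin.mk_one, Fin.isValue, Matrix.of_apply]
      rw [hI₁ x, hI₂ x]
      linear_combination (S (E+1) c x * e₁ * e₂) * hzw + S (E+1) c x * he
    · simp only [Matrix.cons_val', Matrix.cons_val_zero, Matrix.empty_val',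
        Matrix.cons_val_fin_one, Matrix.cons_val_one, Matrix.head_cons, Matrix.head_fin_const,
        Fin.zero_eta, Fin.mk_one, Fin.isValue, Matrix.of_apply]
      rw [hI₁ x, hI₂ x]
      linear_combination (S (E+1) s x * e₁ * e₂) * hzw + S (E+1) s x * he
    · simp only [Matrix.cons_val', Matrix.cons_val_zero, Matrix.empty_val',
        Matrix.cons_val_fin_one, Matrix.cons_val_one, Matrix.head_cons, Matrix.head_fin_const,
        Fin.zero_eta, Fin.mk_one, Fin.isValue, Matrix.of_apply]
      rw [J1, J2]
      linear_combination (-(starRingEnd ℂ) (S (E+1) s x) * e₁ * e₂) * hzw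
        + (-(starRingEnd ℂ) (S (E+1) s x)) * he
    · simp only [Matrix.cons_val', Matrix.cons_val_zero, Matrix.empty_val',
        Matrix.cons_val_fin_one, Matrix.cons_val_one, Matrix.head_cons, Matrix.head_fin_const,
        Fin.zero_eta, Fin.mk_one, Fin.isValue, Matrix.of_apply]
      rw [J1, J2]
      linear_combination ((starRingEnd ℂ) (S (E+1) c x) * e₁ * e₂) * hzw
        + ((starRingEnd ℂ) (S (E+1) c x)) * he

/-! ### From cos/sin series to exponential series -/

lemma Ef_add_neg (j : ℕ) (x : ℝ) :
    Ef j x + Ef (-(j:ℤ)) x = 2 * ((Real.cos ((j:ℝ) * x) : ℝ) : ℂ) := by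
  have h1 : ((j:ℤ):ℂ) * (x:ℂ) * Complex.I = (((j:ℝ) * x : ℝ) : ℂ) * Complex.I := by
    push_cast; ring
  have h2 : (Int.cast (-(j:ℤ)) : ℂ) * (x:ℂ) * Complex.I
      = (-((j:ℝ) * x : ℝ) : ℂ) * Complex.I := by
    push_cast; ring
  rw [Ef, Ef, h1, h2, Complex.exp_mul_I, Complex.exp_mul_I, Complex.cos_neg,
    Complex.sin_neg, Complex.ofReal_cos]
  ring

lemma Ef_sub_neg (j : ℕ) (x : ℝ) :
    Ef j x - Ef (-(j:ℤ)) x = 2 * Complex.I * ((Real.sin ((j:ℝ) * x) : ℝ) : ℂ) := by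
  have h1 : ((j:ℤ):ℂ) * (x:ℂ) * Complex.I = (((j:ℝ) * x : ℝ) : ℂ) * Complex.I := by
    push_cast; ring
  have h2 : (Int.cast (-(j:ℤ)) : ℂ) * (x:ℂ) * Complex.I
      = (-((j:ℝ) * x : ℝ) : ℂ) * Complex.I := by
    push_cast; ring
  rw [Ef, Ef, h1, h2, Complex.exp_mul_I, Complex.exp_mul_I, Complex.cos_neg,
    Complex.sin_neg, Complex.ofReal_sin]
  ring

end QSPproof

theorem qsp_sufficient_conditions (d : ℕ) (P Q : ℝ → ℂ) (a b : ℕ → ℂ)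
    -- (i) P(x) = Σ_{j=0}^{d} a_j cos(jx), Q(x) = Σ_{j=1}^{d} b_j sin(jx)
    (hP : ∀ x : ℝ, P x = ∑ j ∈ Finset.range (d + 1), a j * (Real.cos (j * x) : ℂ))
    (hQ : ∀ x : ℝ, Q x = ∑ j ∈ Finset.Icc 1 d, b j * (Real.sin (j * x) : ℂ))
    -- (ii) parity: a_j = 0 and b_j = 0 whenever j ≢ d (mod 2)
    (ha : ∀ j : ℕ, j % 2 ≠ d % 2 → a j = 0)
    (hb : ∀ j : ℕ, j % 2 ≠ d % 2 → b j = 0)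
    -- (iii) |P(x)|² + |Q(x)|² = 1 on [−π, π]
    (hnorm : ∀ x ∈ Set.Icc (-Real.pi) Real.pi,
      ‖P x‖ ^ 2 + ‖Q x‖ ^ 2 = 1) :
    ∃ Φ : Fin (d + 1) → ℝ, ∀ x ∈ Set.Icc (-Real.pi) Real.pi,
      Mqsp d Φ x =
        !![P x, Q x; -(starRingEnd ℂ) (Q x), (starRingEnd ℂ) (P x)] := by
  classical
  open QSPproof in
  set c : ℤ → ℂ := fun j =>
    if j.natAbs ≤ d then (if j = 0 then a 0 else a j.natAbs / 2) else 0 with hcdef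
  set s : ℤ → ℂ := fun j =>
    if j.natAbs ≤ d ∧ j ≠ 0 then
      (if 0 < j then -(Complex.I/2) * b j.natAbs else (Complex.I/2) * b j.natAbs)
    else 0 with hsdef
  have hI2 : Complex.I ^ 2 = -1 := Complex.I_sq
  -- P and Q as exponential sums
  have hP' : ∀ x : ℝ, P x = QSPproof.S d c x := by
    intro x
    have hsplit : QSPproof.S d c x
        = c 0 * QSPproof.Ef 0 x + ∑ j ∈ Finset.Icc 1 d,
            (c (j:ℤ) * QSPproof.Ef (j:ℤ) x + c (-(j:ℤ)) * QSPproof.Ef (-(j:ℤ)) x) :=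
      QSPproof.sum_Icc_symm_split d (fun j => c j * QSPproof.Ef j x)
    rw [hP x, hsplit,
      show Finset.range (d+1) = insert 0 (Finset.Icc 1 d) from by ext m; simp; omega,
      Finset.sum_insert (by simp)]
    have h0 : c 0 * QSPproof.Ef 0 x = a 0 * (Real.cos ((0:ℕ) * x) : ℂ) := by
      simp [hcdef, QSPproof.Ef_zero]
    rw [h0]
    congr 1
    refine Finset.sum_congr rfl fun j hj => ?_
    simp only [Finset.mem_Icc] at hj
    have hc1 : c (j:ℤ) = a j / 2 := by
      simp only [hcdef]
      rw [if_pos (by simp; omega), if_neg (by exact_mod_cast (by omega : (j:ℤ) ≠ 0))]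
      simp
    have hc2 : c (-(j:ℤ)) = a j / 2 := by
      simp only [hcdef]
      rw [if_pos (by simp; omega), if_neg (by omega)]
      simp
    have hEf := QSPproof.Ef_add_neg j x
    rw [hc1, hc2]
    linear_combination (-(a j) / 2) * hEf
  have hQ' : ∀ x : ℝ, Q x = QSPproof.S d s x := by
    intro x
    have hsplit : QSPproof.S d s x
        = s 0 * QSPproof.Ef 0 x + ∑ j ∈ Finset.Icc 1 d,
            (s (j:ℤ) * QSPproof.Ef (j:ℤ) x + s (-(j:ℤ)) * QSPproof.Ef (-(j:ℤ)) x) :=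
      QSPproof.sum_Icc_symm_split d (fun j => s j * QSPproof.Ef j x)
    have h0 : s 0 * QSPproof.Ef 0 x = 0 := by simp [hsdef]
    rw [hQ x, hsplit, h0, zero_add]
    refine Finset.sum_congr rfl fun j hj => ?_
    simp only [Finset.mem_Icc] at hj
    have hs1 : s (j:ℤ) = -(Complex.I/2) * b j := by
      simp only [hsdef]
      rw [if_pos ⟨by simp; omega, by exact_mod_cast (by omega : (j:ℤ) ≠ 0)⟩,
        if_pos (by exact_mod_cast (by omega : 0 < (j:ℤ)))]
      simp
    have hs2 : s (-(j:ℤ)) = (Complex.I/2) * b j := by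
      simp only [hsdef]
      rw [if_pos ⟨by simp; omega, by omega⟩, if_neg (by omega)]
      simp
    have hEf := QSPproof.Ef_sub_neg j x
    rw [hs1, hs2]
    linear_combination ((Complex.I/2) * b j) * hEf
      + (b j * ((Real.sin ((j:ℝ) * x) : ℝ) : ℂ)) * hI2
  -- hypotheses of the core theorem
  have hc : ∀ j : ℤ, (d : ℤ) < |j| → c j = 0 := by
    intro j hj
    rw [Int.abs_eq_natAbs] at hj
    simp only [hcdef]
    rw [if_neg (by omega)]
  have hs : ∀ j : ℤ, (d : ℤ) < |j| → s j = 0 := by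
    intro j hj
    rw [Int.abs_eq_natAbs] at hj
    simp only [hsdef]
    rw [if_neg (by omega)]
  have hce : ∀ j : ℤ, c (-j) = c j := by
    intro j
    simp only [hcdef, Int.natAbs_neg, neg_eq_zero]
  have hso : ∀ j : ℤ, s (-j) = -s j := by
    intro j
    simp only [hsdef, Int.natAbs_neg, neg_eq_zero, ne_eq]
    by_cases h1 : j.natAbs ≤ d ∧ ¬ j = 0
    · rw [if_pos h1, if_pos h1]
      rcases lt_trichotomy j 0 with h|h|h
      · rw [if_pos (by omega), if_neg (by omega)]
        ring
      · exact absurd h h1.2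
      · rw [if_neg (by omega), if_pos h]
        ring
    · rw [if_neg h1, if_neg h1, neg_zero]
  have hcp : ∀ j : ℤ, (j + (d : ℤ)) % 2 ≠ 0 → c j = 0 := by
    intro j hj
    simp only [hcdef]
    by_cases h1 : j.natAbs ≤ d
    · rw [if_pos h1]
      by_cases h2 : j = 0
      · rw [if_pos h2, ha 0 (by omega)]
      · rw [if_neg h2, ha j.natAbs (by omega)]
        simp
    · rw [if_neg h1]
  have hsp : ∀ j : ℤ, (j + (d : ℤ)) % 2 ≠ 0 → s j = 0 := by
    intro j hj
    simp only [hsdef]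
    by_cases h1 : j.natAbs ≤ d ∧ j ≠ 0
    · rw [if_pos h1, hb j.natAbs (by omega)]
      split_ifs <;> ring
    · rw [if_neg h1]
  -- the normalization, extended to all of ℝ by periodicity
  have hnormIcc : ∀ y ∈ Set.Icc (-Real.pi) Real.pi,
      QSPproof.S d c y * (starRingEnd ℂ) (QSPproof.S d c y)
        + QSPproof.S d s y * (starRingEnd ℂ) (QSPproof.S d s y) = 1 := by
    intro y hy
    have h := hnorm y hy
    rw [hP' y, hQ' y] at h
    rw [Complex.mul_conj, Complex.mul_conj, ← Complex.ofReal_add,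
      show Complex.normSq (QSPproof.S d c y) + Complex.normSq (QSPproof.S d s y) = 1 from by
        rw [← Complex.sq_norm, ← Complex.sq_norm]; exact h]
    norm_num
  have hnormR : ∀ x : ℝ,
      QSPproof.S d c x * (starRingEnd ℂ) (QSPproof.S d c x)
        + QSPproof.S d s x * (starRingEnd ℂ) (QSPproof.S d s x) = 1 := by
    intro x
    have hπ : (0:ℝ) < Real.pi := Real.pi_pos
    set k : ℤ := round (x / (2 * Real.pi)) with hk
    set y : ℝ := x - 2 * Real.pi * k with hy
    have hmem : y ∈ Set.Icc (-Real.pi) Real.pi := by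
      have hr := abs_sub_round (x / (2 * Real.pi))
      have h2π : (0:ℝ) < 2 * Real.pi := by linarith
      have hyval : y = (2 * Real.pi) * (x / (2 * Real.pi) - k) := by
        rw [hy]
        field_simp
      have : |y| ≤ Real.pi := by
        rw [hyval, abs_mul, abs_of_pos h2π]
        calc (2 * Real.pi) * |x / (2 * Real.pi) - k| ≤ (2 * Real.pi) * (1/2) := by
              exact mul_le_mul_of_nonneg_left hr (le_of_lt h2π)
          _ = Real.pi := by ring
      constructor
      · linarith [neg_abs_le y]
      · linarith [le_abs_self y]
    have hxy : x = y + 2 * Real.pi * (k:ℝ) := by rw [hy]; ring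
    rw [hxy, QSPproof.S_periodic, QSPproof.S_periodic]
    exact hnormIcc y hmem
  obtain ⟨Φ, hΦ⟩ := QSPproof.core d c s hc hs hce hso hcp hsp hnormR
  refine ⟨Φ, fun x _ => ?_⟩
  rw [hP' x, hQ' x]
  exact hΦ x
end

section
/- Let V = ℂ^N be a finite-dimensional complex inner product space, U a unitary operator on V, Π an orthogonal projection on V (Π² = Π = Π†), |0̄⟩ ∈ V a unit vector, |ψ⟩ ∈ V a unit vector, and a a real number with 0 < a ≤ 1, such that Π U |0̄⟩ = a|ψ⟩. Let k := ⌈π/(4·arcsin(a)) − 1/2⌉ and θ := π/(4k+2). Let R be a unitary operator on ℂ² whose (1,1) entry (i.e., ⟨0|R|0⟩) equals sin(θ)/a. Define U′ := R ⊗ U on ℂ² ⊗ V, and W′ := U′ · (2(|0⟩⟨0| ⊗ |0̄⟩⟨0̄|) − I) · U′† · (I − 2(|0⟩⟨0| ⊗ Π)). Then (|0⟩⟨0| ⊗ Π) · (W′)^k · U′ · (|0⟩ ⊗ |0̄⟩) = |0⟩ ⊗ |ψ⟩. -/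
/-!
STATEMENT 7 (Exact amplitude amplification).
V = ℂ^N is modelled by `Fin N → ℂ`, operators by matrices, the ancilla qubit
by `Fin 2`, and tensor products by the Kronecker product on `Fin 2 × Fin N`.
-/

open Complex Matrix
open scoped Matrix Kronecker

lemma kron_mulVec {m n : Type*} [Fintype m] [Fintype n]
    (A : Matrix m m ℂ) (B : Matrix n n ℂ) (x : m → ℂ) (y : n → ℂ) :
    (A ⊗ₖ B).mulVec (fun p => x p.1 * y p.2) = fun p => A.mulVec x p.1 * B.mulVec y p.2 := by
  funext p
  simp only [Matrix.mulVec, dotProduct, Matrix.kroneckerMap_apply,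
    Fintype.sum_prod_type]
  rw [Finset.sum_mul_sum]
  exact Finset.sum_congr rfl fun i _ => Finset.sum_congr rfl fun j _ => by ring

lemma kron_dot {m n : Type*} [Fintype m] [Fintype n]
    (x x' : m → ℂ) (y y' : n → ℂ) :
    (fun p : m × n => x p.1 * y p.2) ⬝ᵥ (fun p => x' p.1 * y' p.2)
      = (x ⬝ᵥ x') * (y ⬝ᵥ y') := by
  simp only [dotProduct, Fintype.sum_prod_type]
  rw [Finset.sum_mul_sum]
  exact Finset.sum_congr rfl fun i _ => Finset.sum_congr rfl fun j _ => by ring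

lemma vmv_mulVec {m : Type*} [Fintype m] (u v w : m → ℂ) :
    (Matrix.vecMulVec u v).mulVec w = (v ⬝ᵥ w) • u := by
  funext i
  simp only [Matrix.mulVec, dotProduct, Matrix.vecMulVec_apply, Pi.smul_apply,
    smul_eq_mul, Finset.sum_mul]
  exact Finset.sum_congr rfl fun j _ => by ring

lemma kron_conjTranspose {m n : Type*} [Fintype m] [Fintype n]
    (A : Matrix m m ℂ) (B : Matrix n n ℂ) :
    (A ⊗ₖ B).conjTranspose = A.conjTranspose ⊗ₖ B.conjTranspose := by
  ext p q
  simp [Matrix.conjTranspose_apply, Matrix.kroneckerMap_apply, mul_comm]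

lemma star_kron {m n : Type*} (x : m → ℂ) (y : n → ℂ) :
    star (fun p : m × n => x p.1 * y p.2) = fun p : m × n => star x p.1 * star y p.2 := by
  funext p
  simp [Pi.star_apply, mul_comm]

theorem exact_amplitude_amplification {N : ℕ}
    (U Pr : Matrix (Fin N) (Fin N) ℂ)
    -- U is unitary
    (hU : U ∈ Matrix.unitaryGroup (Fin N) ℂ)
    -- Π is an orthogonal projection: Π² = Π = Π†
    (hPrProj : Pr * Pr = Pr) (hPrSA : Pr.conjTranspose = Pr)
    -- |0̄⟩ and |ψ⟩ are unit vectors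
    (zbar ψ : Fin N → ℂ)
    (hzbar : ∑ i, Complex.normSq (zbar i) = 1)
    (hψ : ∑ i, Complex.normSq (ψ i) = 1)
    -- 0 < a ≤ 1 and Π U |0̄⟩ = a |ψ⟩
    (a : ℝ) (ha : 0 < a) (ha1 : a ≤ 1)
    (hamp : Pr.mulVec (U.mulVec zbar) = (a : ℂ) • ψ)
    -- k := ⌈π/(4 arcsin a) − 1/2⌉ and θ := π/(4k+2)
    (k : ℕ) (hk : k = ⌈Real.pi / (4 * Real.arcsin a) - 1 / 2⌉₊)
    (θ : ℝ) (hθ : θ = Real.pi / (4 * k + 2))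
    -- R is a single-qubit unitary with ⟨0|R|0⟩ = sin(θ)/a
    (R : Matrix (Fin 2) (Fin 2) ℂ)
    (hR : R ∈ Matrix.unitaryGroup (Fin 2) ℂ)
    (hR00 : R 0 0 = ((Real.sin θ / a : ℝ) : ℂ)) :
    -- |0⟩⟨0| on the ancilla qubit
    let P0 : Matrix (Fin 2) (Fin 2) ℂ := !![1, 0; 0, 0]
    -- |0̄⟩⟨0̄|
    let Pzbar : Matrix (Fin N) (Fin N) ℂ := Matrix.vecMulVec zbar (star zbar)
    -- U′ := R ⊗ U
    let U' : Matrix (Fin 2 × Fin N) (Fin 2 × Fin N) ℂ := R ⊗ₖ U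
    -- W′ := U′ (2|0⟩⟨0| ⊗ |0̄⟩⟨0̄| − I) U′† (I − 2|0⟩⟨0| ⊗ Π)
    let W' : Matrix (Fin 2 × Fin N) (Fin 2 × Fin N) ℂ :=
      U' * ((2 : ℂ) • (P0 ⊗ₖ Pzbar) - 1) * U'.conjTranspose *
        (1 - (2 : ℂ) • (P0 ⊗ₖ Pr))
    -- conclusion: (|0⟩⟨0| ⊗ Π) (W′)^k U′ (|0⟩ ⊗ |0̄⟩) = |0⟩ ⊗ |ψ⟩
    (P0 ⊗ₖ Pr).mulVec ((W' ^ k * U').mulVec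
        (fun p => (if p.1 = 0 then 1 else 0) * zbar p.2)) =
      fun p => (if p.1 = 0 then 1 else 0) * ψ p.2 := by
  intro P0 Pzbar U' W'
  have haC : (a : ℂ) ≠ 0 := Complex.ofReal_ne_zero.mpr (ne_of_gt ha)
  set e0 : Fin 2 → ℂ := fun i => if i = 0 then 1 else 0 with he0
  set Ψ : Fin 2 × Fin N → ℂ := fun p => e0 p.1 * zbar p.2 with hΨdef
  set g : Fin 2 × Fin N → ℂ := fun p => e0 p.1 * ψ p.2 with hgdef
  set Rv : Fin 2 → ℂ := fun i => R i 0 with hRv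
  set Uz : Fin N → ℂ := U.mulVec zbar with hUzdef
  set Φ : Fin 2 × Fin N → ℂ := fun p => Rv p.1 * Uz p.2 with hΦdef
  set s : ℂ := ((Real.sin θ : ℝ) : ℂ) with hs
  set b : Fin 2 × Fin N → ℂ := Φ - s • g with hbdef
  set P : Matrix (Fin 2 × Fin N) (Fin 2 × Fin N) ℂ := P0 ⊗ₖ Pr with hPdef
  -- unitarity facts
  have hUU : U.conjTranspose * U = 1 := by
    simpa [Matrix.star_eq_conjTranspose] using Matrix.mem_unitaryGroup_iff'.mp hU
  have hUU' : U * U.conjTranspose = 1 := by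
    simpa [Matrix.star_eq_conjTranspose] using Matrix.mem_unitaryGroup_iff.mp hU
  have hRR : R.conjTranspose * R = 1 := by
    simpa [Matrix.star_eq_conjTranspose] using Matrix.mem_unitaryGroup_iff'.mp hR
  have hRR' : R * R.conjTranspose = 1 := by
    simpa [Matrix.star_eq_conjTranspose] using Matrix.mem_unitaryGroup_iff.mp hR
  have hU'def : U' = R ⊗ₖ U := rfl
  have hU'U' : U' * U'.conjTranspose = 1 := by
    rw [hU'def, kron_conjTranspose, ← Matrix.mul_kronecker_mul, hRR', hUU',
      Matrix.one_kronecker_one]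
  have hW'def : W' = U' * ((2 : ℂ) • (P0 ⊗ₖ Pzbar) - 1) * U'.conjTranspose *
      (1 - (2 : ℂ) • P) := rfl
  -- component facts
  have hRe0 : R.mulVec e0 = Rv := by
    funext i
    simp [Matrix.mulVec, dotProduct, Fin.sum_univ_two, he0, hRv]
  have hP0e0 : P0.mulVec e0 = e0 := by
    funext i
    fin_cases i <;>
      simp [Matrix.mulVec, dotProduct, Fin.sum_univ_two, he0, P0]
  have hP0Rv : P0.mulVec Rv = R 0 0 • e0 := by
    funext i
    fin_cases i <;>
      simp [Matrix.mulVec, dotProduct, Fin.sum_univ_two, he0, hRv, P0]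
  have hPrψ : Pr.mulVec ψ = ψ := by
    have h1 : Pr.mulVec (Pr.mulVec Uz) = Pr.mulVec Uz := by
      rw [Matrix.mulVec_mulVec, hPrProj]
    rw [hamp, Matrix.mulVec_smul] at h1
    exact smul_right_injective (Fin N → ℂ) haC h1
  have hΦeq : U'.mulVec Ψ = Φ := by
    rw [hU'def, hΨdef, kron_mulVec, hRe0, hΦdef]
  have hPg : P.mulVec g = g := by
    rw [hPdef, hgdef, kron_mulVec, hP0e0, hPrψ]
  have hsa : R 0 0 * (a : ℂ) = s := by
    rw [hR00, hs, ← Complex.ofReal_mul, div_mul_cancel₀ _ (ne_of_gt ha)]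
  have hPΦ : P.mulVec Φ = s • g := by
    rw [hPdef, hΦdef, kron_mulVec, hP0Rv, hamp]
    funext p
    simp only [Pi.smul_apply, smul_eq_mul, hgdef]
    rw [← hsa]
    ring
  -- inner products
  have hstarΦ : star Φ = fun p => star Rv p.1 * star Uz p.2 := by
    rw [hΦdef]; exact star_kron Rv Uz
  have hRv1 : star Rv ⬝ᵥ Rv = 1 := by
    have h := congrFun (congrFun hRR 0) 0
    simpa [Matrix.mul_apply, Matrix.one_apply, Matrix.conjTranspose_apply,
      dotProduct, hRv, Pi.star_apply] using h
  have hz1 : star zbar ⬝ᵥ zbar = 1 := by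
    simp only [dotProduct, Pi.star_apply]
    have h : ∀ i, star (zbar i) * zbar i = ((Complex.normSq (zbar i) : ℝ) : ℂ) := fun i => by
      rw [mul_comm]; exact_mod_cast Complex.mul_conj (zbar i)
    rw [Finset.sum_congr rfl fun i _ => h i, ← Complex.ofReal_sum, hzbar,
      Complex.ofReal_one]
  have hψ1 : star ψ ⬝ᵥ ψ = 1 := by
    simp only [dotProduct, Pi.star_apply]
    have h : ∀ i, star (ψ i) * ψ i = ((Complex.normSq (ψ i) : ℝ) : ℂ) := fun i => by
      rw [mul_comm]; exact_mod_cast Complex.mul_conj (ψ i)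
    rw [Finset.sum_congr rfl fun i _ => h i, ← Complex.ofReal_sum, hψ,
      Complex.ofReal_one]
  have hUz1 : star Uz ⬝ᵥ Uz = 1 := by
    rw [hUzdef, Matrix.star_mulVec, dotProduct_mulVec, Matrix.vecMul_vecMul,
      hUU, Matrix.vecMul_one, hz1]
  have hΦΦ : star Φ ⬝ᵥ Φ = 1 := by
    rw [hstarΦ, hΦdef, kron_dot, hRv1, hUz1, one_mul]
  have hUzψ : star Uz ⬝ᵥ ψ = (a : ℂ) := by
    conv_lhs => rw [← hPrψ]
    rw [dotProduct_mulVec]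
    have h2 : star Uz ᵥ* Pr = star ((a : ℂ) • ψ) := by
      rw [← hamp]
      conv_rhs => rw [Matrix.star_mulVec, hPrSA]
    rw [h2, star_smul, smul_dotProduct, hψ1]
    simp [Complex.conj_ofReal]
  have hΦg : star Φ ⬝ᵥ g = s := by
    rw [hstarΦ, hgdef, kron_dot, hUzψ]
    have he : star Rv ⬝ᵥ e0 = star (R 0 0) := by
      simp [dotProduct, Fin.sum_univ_two, he0, hRv]
    rw [he, hR00, Complex.star_def, Complex.conj_ofReal, ← Complex.ofReal_mul,
      div_mul_cancel₀ _ (ne_of_gt ha), hs]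
  -- the reflection formula
  have hQ : P0 ⊗ₖ Pzbar = Matrix.vecMulVec Ψ (star Ψ) := by
    ext p q
    obtain ⟨i, m⟩ := p; obtain ⟨j, n⟩ := q
    rw [hΨdef]
    fin_cases i <;> fin_cases j <;>
      simp [Matrix.kroneckerMap_apply, Matrix.vecMulVec_apply, Pi.star_apply, he0,
        P0, Pzbar, mul_comm]
  have hW : ∀ v, W'.mulVec v =
      (2 * (star Φ ⬝ᵥ ((1 - (2 : ℂ) • P).mulVec v))) • Φ
        - (1 - (2 : ℂ) • P).mulVec v := by
    intro v
    set w := (1 - (2 : ℂ) • P).mulVec v with hwdef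
    rw [hW'def]
    simp only [← Matrix.mulVec_mulVec]
    rw [← hwdef, Matrix.sub_mulVec, Matrix.smul_mulVec, hQ, vmv_mulVec,
      Matrix.one_mulVec]
    have hdot : star Ψ ⬝ᵥ (U'.conjTranspose.mulVec w) = star Φ ⬝ᵥ w := by
      rw [dotProduct_mulVec, ← Matrix.star_mulVec, hΦeq]
    rw [hdot, Matrix.mulVec_sub, Matrix.mulVec_smul, Matrix.mulVec_smul, hΦeq,
      Matrix.mulVec_mulVec, hU'U', Matrix.one_mulVec]
    module
  have h1g : (1 - (2 : ℂ) • P).mulVec g = -g := by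
    rw [Matrix.sub_mulVec, Matrix.one_mulVec, Matrix.smul_mulVec, hPg]
    module
  have hWg : W'.mulVec g = g - (2 * s) • Φ := by
    rw [hW g, h1g, dotProduct_neg, hΦg]
    module
  have hPb : P.mulVec b = 0 := by
    rw [hbdef, Matrix.mulVec_sub, Matrix.mulVec_smul, hPΦ, hPg, sub_self]
  have h1b : (1 - (2 : ℂ) • P).mulVec b = b := by
    rw [Matrix.sub_mulVec, Matrix.one_mulVec, Matrix.smul_mulVec, hPb,
      smul_zero, sub_zero]
  have hΦb : star Φ ⬝ᵥ b = 1 - s * s := by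
    rw [hbdef]
    simp [dotProduct_sub, dotProduct_smul, hΦΦ, hΦg, smul_eq_mul]
  have hWb : W'.mulVec b = (2 * (1 - s * s)) • Φ - b := by
    rw [hW b, h1b, hΦb]
  have hΦgb : Φ = s • g + b := by rw [hbdef]; module
  show P.mulVec ((W' ^ k * U').mulVec Ψ) = g
  rcases Nat.eq_zero_or_pos k with hk0 | hkpos
  · rw [hk0, pow_zero, one_mul, hΦeq, hPΦ]
    have hθ2 : θ = Real.pi / 2 := by rw [hθ, hk0]; norm_num
    have hs1 : s = 1 := by
      rw [hs, hθ2, Real.sin_pi_div_two, Complex.ofReal_one]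
    rw [hs1, one_smul]
  · -- k ≥ 1
    have hθpos : 0 < θ := by
      rw [hθ]; positivity
    have hθlt : θ < Real.pi / 2 := by
      rw [hθ]
      have h2 : (2 : ℝ) < 4 * k + 2 := by
        have : (1 : ℝ) ≤ k := by exact_mod_cast hkpos
        nlinarith
      exact div_lt_div_of_pos_left Real.pi_pos (by norm_num) h2
    have hc : Real.cos θ ≠ 0 := by
      have := Real.cos_pos_of_mem_Ioo
        ⟨by linarith [Real.pi_pos], hθlt⟩ (x := θ)
      exact ne_of_gt this
    have hss : Real.sin θ ^ 2 + Real.cos θ ^ 2 = 1 := Real.sin_sq_add_cos_sq θ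
    have h1s : 1 - Real.sin θ ^ 2 = Real.cos θ ^ 2 := by linarith
    have key : ∀ j : ℕ, (W' ^ j).mulVec Φ =
        ((Real.sin ((2 * (j : ℝ) + 1) * θ) : ℝ) : ℂ) • g
          + ((Real.cos ((2 * (j : ℝ) + 1) * θ) / Real.cos θ : ℝ) : ℂ) • b := by
      intro j
      induction j with
      | zero =>
        rw [pow_zero, Matrix.one_mulVec]
        have e1 : (2 * ((0 : ℕ) : ℝ) + 1) * θ = θ := by push_cast; ring
        rw [e1, div_self hc, Complex.ofReal_one, one_smul, ← hs, hΦgb]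
      | succ j ih =>
        have R1 : Real.sin ((2 * ((j + 1 : ℕ) : ℝ) + 1) * θ)
            = Real.sin ((2 * (j : ℝ) + 1) * θ) * (1 - 2 * Real.sin θ ^ 2)
              + Real.cos ((2 * (j : ℝ) + 1) * θ) / Real.cos θ
                * (2 * Real.sin θ * (1 - Real.sin θ ^ 2)) := by
          have e2 : (2 * ((j + 1 : ℕ) : ℝ) + 1) * θ = (2 * (j : ℝ) + 1) * θ + 2 * θ := by
            push_cast; ring
          have h2s : 1 - 2 * Real.sin θ ^ 2 = 2 * Real.cos θ ^ 2 - 1 := by linarith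
          rw [e2, h2s, h1s, Real.sin_add, Real.sin_two_mul, Real.cos_two_mul]
          field_simp
        have R2 : Real.cos ((2 * ((j + 1 : ℕ) : ℝ) + 1) * θ) / Real.cos θ
            = Real.cos ((2 * (j : ℝ) + 1) * θ) / Real.cos θ
                * (2 * (1 - Real.sin θ ^ 2) - 1)
              - Real.sin ((2 * (j : ℝ) + 1) * θ) * (2 * Real.sin θ) := by
          have e2 : (2 * ((j + 1 : ℕ) : ℝ) + 1) * θ = (2 * (j : ℝ) + 1) * θ + 2 * θ := by
            push_cast; ring
          rw [e2, h1s, Real.cos_add, Real.sin_two_mul, Real.cos_two_mul]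
          field_simp
        rw [pow_succ', ← Matrix.mulVec_mulVec, ih, Matrix.mulVec_add,
          Matrix.mulVec_smul, Matrix.mulVec_smul, hWg, hWb, hΦgb, R1, R2, hs]
        push_cast
        match_scalars <;> ring
    rw [← Matrix.mulVec_mulVec, hΦeq, key k, Matrix.mulVec_add, Matrix.mulVec_smul,
      Matrix.mulVec_smul, hPg, hPb, smul_zero, add_zero]
    have hfin : (2 * (k : ℝ) + 1) * θ = Real.pi / 2 := by
      rw [hθ]
      have h42 : (4 * (k : ℝ) + 2) ≠ 0 := by positivity
      field_simp
      ring
    rw [hfin, Real.sin_pi_div_two, Complex.ofReal_one, one_smul]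
end

section
/- Let a be a real number with 0 < a ≤ 1, let k := ⌈π/(4·arcsin(a)) − 1/2⌉, and let θ := π/(4k+2). Then 0 < sin(θ) ≤ a, so that sin(θ)/a ∈ (0,1]; in particular there exists a 2×2 unitary matrix R with ⟨0|R|0⟩ = sin(θ)/a. -/
/-!
STATEMENT 8 (Existence of the rotation R in exact amplitude amplification).
-/

open Complex Matrix

set_option maxHeartbeats 1000000 in
theorem rotation_exists (a : ℝ) (ha : 0 < a) (ha1 : a ≤ 1)
    (k : ℕ) (hk : k = ⌈Real.pi / (4 * Real.arcsin a) - 1 / 2⌉₊)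
    (θ : ℝ) (hθ : θ = Real.pi / (4 * k + 2)) :
    0 < Real.sin θ ∧ Real.sin θ ≤ a ∧
    Real.sin θ / a ∈ Set.Ioc (0 : ℝ) 1 ∧
    ∃ R : Matrix (Fin 2) (Fin 2) ℂ,
      R ∈ Matrix.unitaryGroup (Fin 2) ℂ ∧
      R 0 0 = ((Real.sin θ / a : ℝ) : ℂ) := by
  have hL : 0 < Real.arcsin a := Real.arcsin_pos.2 ha
  have hL2 : Real.arcsin a ≤ Real.pi / 2 := Real.arcsin_le_pi_div_two a
  have hden : (0:ℝ) < 4 * k + 2 := by positivity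
  have hθpos : 0 < θ := by
    rw [hθ]; exact div_pos Real.pi_pos hden
  have hkle : Real.pi / (4 * Real.arcsin a) - 1 / 2 ≤ (k : ℝ) := by
    rw [hk]; exact Nat.le_ceil _
  have hθle : θ ≤ Real.arcsin a := by
    rw [hθ, div_le_iff₀ hden]
    have : Real.pi / (4 * Real.arcsin a) ≤ (k : ℝ) + 1 / 2 := by linarith
    calc Real.pi = Real.pi / (4 * Real.arcsin a) * (4 * Real.arcsin a) := by
          field_simp
      _ ≤ ((k : ℝ) + 1 / 2) * (4 * Real.arcsin a) := by
          apply mul_le_mul_of_nonneg_right this (by positivity)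
      _ = Real.arcsin a * (4 * k + 2) := by ring
  have hsinpos : 0 < Real.sin θ :=
    Real.sin_pos_of_pos_of_lt_pi hθpos
      (lt_of_le_of_lt hθle (lt_of_le_of_lt hL2 (by linarith [Real.pi_pos])))
  have hsinle : Real.sin θ ≤ a := by
    calc Real.sin θ ≤ Real.sin (Real.arcsin a) := by
          apply Real.sin_le_sin_of_le_of_le_pi_div_two _ hL2 hθle
          linarith [Real.neg_pi_div_two_le_arcsin a, hθpos]
      _ = a := Real.sin_arcsin (by linarith) ha1
  refine ⟨hsinpos, hsinle, ⟨div_pos hsinpos ha, div_le_one_of_le₀ hsinle ha.le⟩, ?_⟩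
  set c : ℝ := Real.sin θ / a with hc
  have hc1 : c ≤ 1 := div_le_one_of_le₀ hsinle ha.le
  have hc0 : 0 < c := div_pos hsinpos ha
  set s : ℝ := Real.sqrt (1 - c ^ 2) with hs
  have hcs : c ^ 2 + s ^ 2 = 1 := by
    rw [hs, Real.sq_sqrt (by nlinarith)]; ring
  refine ⟨!![(c:ℂ), -(s:ℂ); (s:ℂ), (c:ℂ)], ?_, by simp⟩
  rw [Matrix.mem_unitaryGroup_iff']
  ext i j
  fin_cases i <;> fin_cases j <;>
    simp [Matrix.mul_apply, Fin.sum_univ_two, Matrix.one_apply,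
      Complex.ext_iff] <;>
    nlinarith [hcs]
end

section
/- Let n₁, n₂ ≥ 1, N₁ = 2^{n₁}, N₂ = 2^{n₂}, x₁^{(i)} := i/N₁ and x₂^{(j)} := j/N₂, and define the unitaries U₁ := Σ_i W(x₁^{(i)}) ⊗ E_{ii} ⊗ I_{N₂} and U₂ := Σ_j W(x₂^{(j)}) ⊗ I_{N₁} ⊗ E_{jj} on ℂ² ⊗ ℂ^{N₁} ⊗ ℂ^{N₂}. Then U₁ and U₂ commute and U₁U₂ = Σ_{i,j} W(x₁^{(i)} + x₂^{(j)}) ⊗ E_{ii} ⊗ E_{jj}; in particular, U₁U₂ is a (1,1,0)-block-encoding of the diagonal operator Σ_{i,j} cos(x₁^{(i)} + x₂^{(j)}) E_{ii} ⊗ E_{jj}, i.e., (⟨0| ⊗ I)(U₁U₂)(|0⟩ ⊗ I) = Σ_{i,j} cos(x₁^{(i)} + x₂^{(j)}) E_{ii} ⊗ E_{jj}. -/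
/-!
STATEMENT 13 (U₁U₂ block-encodes the diagonal operator of cos(x₁⁽ⁱ⁾ + x₂⁽ʲ⁾)).
-/

open Complex Matrix
open scoped Matrix Kronecker

lemma Wmul (a b : ℝ) : Wgate a * Wgate b = Wgate (a + b) := by
  ext i j
  fin_cases i <;> fin_cases j <;>
    simp [Wgate, Matrix.mul_apply, Fin.sum_univ_two, Real.cos_add, Real.sin_add,
      Complex.ext_iff] <;> ring

lemma key {N₁ N₂ : ℕ} (a b : ℝ) (i : Fin N₁) (j : Fin N₂) :
    (Wgate a ⊗ₖ (Matrix.single i i (1:ℂ) ⊗ₖ (1 : Matrix (Fin N₂) (Fin N₂) ℂ))) *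
      (Wgate b ⊗ₖ ((1 : Matrix (Fin N₁) (Fin N₁) ℂ) ⊗ₖ Matrix.single j j (1:ℂ)))
    = Wgate (a + b) ⊗ₖ (Matrix.single i i (1:ℂ) ⊗ₖ Matrix.single j j (1:ℂ)) := by
  rw [← Matrix.mul_kronecker_mul, ← Matrix.mul_kronecker_mul, Wmul, Matrix.mul_one,
    Matrix.one_mul]

lemma key' {N₁ N₂ : ℕ} (a b : ℝ) (i : Fin N₁) (j : Fin N₂) :
    (Wgate b ⊗ₖ ((1 : Matrix (Fin N₁) (Fin N₁) ℂ) ⊗ₖ Matrix.single j j (1:ℂ))) *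
      (Wgate a ⊗ₖ (Matrix.single i i (1:ℂ) ⊗ₖ (1 : Matrix (Fin N₂) (Fin N₂) ℂ)))
    = Wgate (a + b) ⊗ₖ (Matrix.single i i (1:ℂ) ⊗ₖ Matrix.single j j (1:ℂ)) := by
  rw [← Matrix.mul_kronecker_mul, ← Matrix.mul_kronecker_mul, Wmul, Matrix.mul_one,
    Matrix.one_mul, add_comm b a]

theorem sum_variable_block_encoding (n₁ n₂ : ℕ) (h₁ : 1 ≤ n₁) (h₂ : 1 ≤ n₂) :
    let N₁ : ℕ := 2 ^ n₁
    let N₂ : ℕ := 2 ^ n₂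
    -- U₁ := Σᵢ W(x₁⁽ⁱ⁾) ⊗ Eᵢᵢ ⊗ I_{N₂}
    let U₁ : Matrix (Fin 2 × Fin N₁ × Fin N₂) (Fin 2 × Fin N₁ × Fin N₂) ℂ :=
      ∑ i : Fin N₁, Wgate (((i : ℕ) : ℝ) / (N₁ : ℝ)) ⊗ₖ
        (Matrix.single i i (1 : ℂ) ⊗ₖ (1 : Matrix (Fin N₂) (Fin N₂) ℂ))
    -- U₂ := Σⱼ W(x₂⁽ʲ⁾) ⊗ I_{N₁} ⊗ Eⱼⱼ
    let U₂ : Matrix (Fin 2 × Fin N₁ × Fin N₂) (Fin 2 × Fin N₁ × Fin N₂) ℂ :=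
      ∑ j : Fin N₂, Wgate (((j : ℕ) : ℝ) / (N₂ : ℝ)) ⊗ₖ
        ((1 : Matrix (Fin N₁) (Fin N₁) ℂ) ⊗ₖ Matrix.single j j (1 : ℂ))
    -- U₁ and U₂ commute
    U₁ * U₂ = U₂ * U₁ ∧
    -- U₁U₂ = Σᵢⱼ W(x₁⁽ⁱ⁾ + x₂⁽ʲ⁾) ⊗ Eᵢᵢ ⊗ Eⱼⱼ
    U₁ * U₂ = ∑ i : Fin N₁, ∑ j : Fin N₂,
      Wgate (((i : ℕ) : ℝ) / (N₁ : ℝ) + ((j : ℕ) : ℝ) / (N₂ : ℝ)) ⊗ₖ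
        (Matrix.single i i (1 : ℂ) ⊗ₖ Matrix.single j j (1 : ℂ)) ∧
    -- (⟨0| ⊗ I)(U₁U₂)(|0⟩ ⊗ I) = Σᵢⱼ cos(x₁⁽ⁱ⁾ + x₂⁽ʲ⁾) Eᵢᵢ ⊗ Eⱼⱼ
    (∀ p q : Fin N₁ × Fin N₂,
      (U₁ * U₂) ((0 : Fin 2), p) ((0 : Fin 2), q) =
        (∑ i : Fin N₁, ∑ j : Fin N₂,
          (Real.cos (((i : ℕ) : ℝ) / (N₁ : ℝ) + ((j : ℕ) : ℝ) / (N₂ : ℝ)) : ℂ) •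
            (Matrix.single i i (1 : ℂ) ⊗ₖ Matrix.single j j (1 : ℂ))) p q) := by

  intro N₁ N₂ U₁ U₂
  have h12 : U₁ * U₂ = ∑ i : Fin N₁, ∑ j : Fin N₂,
      Wgate (((i : ℕ) : ℝ) / (N₁ : ℝ) + ((j : ℕ) : ℝ) / (N₂ : ℝ)) ⊗ₖ
        (Matrix.single i i (1 : ℂ) ⊗ₖ Matrix.single j j (1 : ℂ)) := by
    simp only [U₁, U₂, Finset.sum_mul, Finset.mul_sum]
    rw [Finset.sum_comm]
    exact Finset.sum_congr rfl fun i _ => Finset.sum_congr rfl fun j _ => key _ _ i j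
  have h21 : U₂ * U₁ = ∑ i : Fin N₁, ∑ j : Fin N₂,
      Wgate (((i : ℕ) : ℝ) / (N₁ : ℝ) + ((j : ℕ) : ℝ) / (N₂ : ℝ)) ⊗ₖ
        (Matrix.single i i (1 : ℂ) ⊗ₖ Matrix.single j j (1 : ℂ)) := by
    simp only [U₁, U₂, Finset.sum_mul, Finset.mul_sum]
    exact Finset.sum_congr rfl fun i _ => Finset.sum_congr rfl fun j _ => key' _ _ i j
  refine ⟨h12.trans h21.symm, h12, fun p q => ?_⟩
  rw [h12]
  simp [Matrix.sum_apply, Wgate, kroneckerMap_apply]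
end

section
/- Let N ≥ 1 and let f, g : {0,…,N−1} → ℝ be functions, both not identically zero, with max_i |f(i)| ≤ 1 and max_i |g(i)| ≤ 1. Let 𝒩_f := (Σ_i f(i)²)^{1/2} and 𝒩_g := (Σ_i g(i)²)^{1/2}, and let |ψ_f⟩ := 𝒩_f^{−1}(f(0),…,f(N−1)) and |ψ_g⟩ := 𝒩_g^{−1}(g(0),…,g(N−1)) be the corresponding normalized states. Suppose ε > 0 and |f(i) − g(i)| ≤ ε · min(𝒩_f, 𝒩_g)/√N for all i. Then the trace distance between the pure states |ψ_f⟩ and |ψ_g⟩ satisfies √(1 − ⟨ψ_f, ψ_g⟩²) ≤ 2ε. -/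
open scoped RealInnerProductSpace

/-!
STATEMENT 14 (Pointwise-close amplitude functions give trace-distance-close states).
For real unit vectors u, v, the trace distance of the corresponding pure states
is √(1 − ⟨u,v⟩²).
-/

theorem trace_distance_of_pointwise_close (N : ℕ) (hN : 1 ≤ N)
    (f g : Fin N → ℝ) (hf : f ≠ 0) (hg : g ≠ 0)
    (hfb : ∀ i, |f i| ≤ 1) (hgb : ∀ i, |g i| ≤ 1)
    (ε : ℝ) (hε : 0 < ε)
    (hclose : ∀ i, |f i - g i| ≤
      ε * min (Real.sqrt (∑ i', f i' ^ 2)) (Real.sqrt (∑ i', g i' ^ 2)) /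
        Real.sqrt N) :
    Real.sqrt (1 -
      (∑ i, (f i / Real.sqrt (∑ i', f i' ^ 2)) *
            (g i / Real.sqrt (∑ i', g i' ^ 2))) ^ 2) ≤ 2 * ε := by
  set a := Real.sqrt (∑ i', f i' ^ 2) with ha_def
  set b := Real.sqrt (∑ i', g i' ^ 2) with hb_def
  have hfsum : 0 < ∑ i', f i' ^ 2 := by
    obtain ⟨i, hi⟩ : ∃ i, f i ≠ 0 := by
      by_contra h; push_neg at h; exact hf (funext h)
    exact Finset.sum_pos' (fun j _ => sq_nonneg _)
      ⟨i, Finset.mem_univ i, by positivity⟩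
  have hgsum : 0 < ∑ i', g i' ^ 2 := by
    obtain ⟨i, hi⟩ : ∃ i, g i ≠ 0 := by
      by_contra h; push_neg at h; exact hg (funext h)
    exact Finset.sum_pos' (fun j _ => sq_nonneg _)
      ⟨i, Finset.mem_univ i, by positivity⟩
  have ha : 0 < a := Real.sqrt_pos.2 hfsum
  have hb : 0 < b := Real.sqrt_pos.2 hgsum
  set F : EuclideanSpace ℝ (Fin N) := WithLp.toLp 2 f with hF_def
  set G : EuclideanSpace ℝ (Fin N) := WithLp.toLp 2 g with hG_def
  have hFn : ‖F‖ = a := by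
    rw [EuclideanSpace.norm_eq, ha_def]
    congr 1; apply Finset.sum_congr rfl; intros; rw [Real.norm_eq_abs, sq_abs]
  have hGn : ‖G‖ = b := by
    rw [EuclideanSpace.norm_eq, hb_def]
    congr 1; apply Finset.sum_congr rfl; intros; rw [Real.norm_eq_abs, sq_abs]
  set u : EuclideanSpace ℝ (Fin N) := a⁻¹ • F with hu_def
  set v : EuclideanSpace ℝ (Fin N) := b⁻¹ • G with hv_def
  have hun : ‖u‖ = 1 := by
    rw [hu_def, norm_smul, hFn, Real.norm_eq_abs, abs_of_pos (inv_pos.2 ha),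
      inv_mul_cancel₀ ha.ne']
  have hvn : ‖v‖ = 1 := by
    rw [hv_def, norm_smul, hGn, Real.norm_eq_abs, abs_of_pos (inv_pos.2 hb),
      inv_mul_cancel₀ hb.ne']
  have ht : (∑ i, (f i / a) * (g i / b)) = ⟪u, v⟫ := by
    rw [hu_def, hv_def, real_inner_smul_left, real_inner_smul_right,
      PiLp.inner_apply]
    rw [Finset.mul_sum, Finset.mul_sum]
    apply Finset.sum_congr rfl; intro i _
    simp only [RCLike.inner_apply, conj_trivial]
    show f i / a * (g i / b) = a⁻¹ * (b⁻¹ * (g i * f i))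
    ring
  set t := ⟪u, v⟫ with ht_def
  rw [ht]
  -- step 1 : sqrt (1 - t^2) ≤ ‖u - v‖
  have hsq : ‖u - v‖ ^ 2 = 2 - 2 * t := by
    rw [← real_inner_self_eq_norm_sq, inner_sub_sub_self,
      real_inner_self_eq_norm_sq, real_inner_self_eq_norm_sq, hun, hvn]
    rw [ht_def, real_inner_comm v u]
    ring
  have step1 : Real.sqrt (1 - t ^ 2) ≤ ‖u - v‖ := by
    have h1 : 1 - t ^ 2 ≤ ‖u - v‖ ^ 2 := by rw [hsq]; nlinarith [sq_nonneg (1 - t)]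
    calc Real.sqrt (1 - t ^ 2) ≤ Real.sqrt (‖u - v‖ ^ 2) := Real.sqrt_le_sqrt h1
      _ = ‖u - v‖ := Real.sqrt_sq (norm_nonneg _)
  -- step 2 : ‖F - G‖ ≤ ε * min a b
  have hm0 : 0 ≤ min a b := le_min ha.le hb.le
  have hNpos : (0:ℝ) < N := by exact_mod_cast hN
  have hsN : 0 < Real.sqrt N := Real.sqrt_pos.2 hNpos
  have step2 : ‖F - G‖ ≤ ε * min a b := by
    have hFG : ‖F - G‖ = Real.sqrt (∑ i, (f i - g i) ^ 2) := by
      rw [EuclideanSpace.norm_eq]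
      congr 1; apply Finset.sum_congr rfl; intros
      rw [Real.norm_eq_abs, sq_abs, PiLp.sub_apply]
    rw [hFG]
    have hsum : (∑ i, (f i - g i) ^ 2) ≤ (ε * min a b) ^ 2 := by
      calc (∑ i, (f i - g i) ^ 2)
          ≤ ∑ _i : Fin N, (ε * min a b / Real.sqrt N) ^ 2 := by
            apply Finset.sum_le_sum; intro i _
            rw [← sq_abs (f i - g i)]
            have h0 : (0:ℝ) ≤ ε * min a b / Real.sqrt N := by positivity
            exact pow_le_pow_left₀ (abs_nonneg _) (hclose i) 2
        _ = (ε * min a b) ^ 2 := by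
            rw [Finset.sum_const, Finset.card_univ, Fintype.card_fin, nsmul_eq_mul,
              div_pow, Real.sq_sqrt hNpos.le]
            field_simp
    calc Real.sqrt (∑ i, (f i - g i) ^ 2) ≤ Real.sqrt ((ε * min a b) ^ 2) :=
        Real.sqrt_le_sqrt hsum
      _ = ε * min a b := Real.sqrt_sq (by positivity)
  -- step 3 : ‖u - v‖ ≤ 2 * ‖F - G‖ / a
  have step3 : ‖u - v‖ ≤ 2 * ‖F - G‖ / a := by
    have hdecomp : u - v = a⁻¹ • (F - G) + (a⁻¹ - b⁻¹) • G := by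
      rw [hu_def, hv_def, smul_sub, sub_smul]; abel
    have htri : ‖u - v‖ ≤ a⁻¹ * ‖F - G‖ + |a⁻¹ - b⁻¹| * b := by
      rw [hdecomp]
      calc ‖a⁻¹ • (F - G) + (a⁻¹ - b⁻¹) • G‖
          ≤ ‖a⁻¹ • (F - G)‖ + ‖(a⁻¹ - b⁻¹) • G‖ := norm_add_le _ _
        _ = a⁻¹ * ‖F - G‖ + |a⁻¹ - b⁻¹| * b := by
            rw [norm_smul, norm_smul, hGn, Real.norm_eq_abs, Real.norm_eq_abs,
              abs_of_pos (inv_pos.2 ha)]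
    have habs : |a⁻¹ - b⁻¹| * b = |b - a| / a := by
      rw [show a⁻¹ - b⁻¹ = (b - a) / (a * b) by field_simp, abs_div,
        abs_of_pos (mul_pos ha hb)]
      field_simp
    have hba : |b - a| ≤ ‖F - G‖ := by
      rw [← hFn, ← hGn, abs_sub_comm]
      exact abs_norm_sub_norm_le F G
    calc ‖u - v‖ ≤ a⁻¹ * ‖F - G‖ + |a⁻¹ - b⁻¹| * b := htri
      _ = ‖F - G‖ / a + |b - a| / a := by rw [habs]; ring
      _ ≤ ‖F - G‖ / a + ‖F - G‖ / a := by
          gcongr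
      _ = 2 * ‖F - G‖ / a := by ring
  calc Real.sqrt (1 - t ^ 2) ≤ ‖u - v‖ := step1
    _ ≤ 2 * ‖F - G‖ / a := step3
    _ ≤ 2 * (ε * min a b) / a := by gcongr
    _ ≤ 2 * (ε * a) / a := by gcongr; exact min_le_left _ _
    _ = 2 * ε := by field_simp
end
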